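/- arXiv:1905.07329 — 11 statements merged into one kernel-verified Lean document; each statement's English description precedes it below -/
import Mathlib

section
/- Let n ≥ 4. If the simplex Δ_{n−1} on n vertices collapses to a complex Y with dim Y ≥ n − 3, then Y has at least one free face. In other words, no collapsing sequence of the simplex on n vertices gets stuck at dimension at least n − 3. -/
/-- A simplicial complex: a collection of finite subsets of the vertex type,
closed under taking subsets. -/
def IsComplex {V : Type*} [DecidableEq V] (X : Set (Finset V)) : Prop :=
  ∀ σ ∈ X, ∀ τ : Finset V, τ ⊆ σ → τ ∈ X

/-- `τ` is a free face of `X`, with `σ` the unique face of `X` properly containing `τ`. -/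
def IsFreeFace {V : Type*} [DecidableEq V] (X : Set (Finset V)) (τ σ : Finset V) : Prop :=
  τ ∈ X ∧ τ.Nonempty ∧ σ ∈ X ∧ τ ⊂ σ ∧ ∀ ρ ∈ X, τ ⊂ ρ → ρ = σ

/-- `X` has a free face. -/
def HasFreeFace {V : Type*} [DecidableEq V] (X : Set (Finset V)) : Prop :=
  ∃ τ σ, IsFreeFace X τ σ

/-- An elementary collapse: remove a free face `τ` together with the unique face `σ`
properly containing it. -/
def CollapseStep {V : Type*} [DecidableEq V] (X Y : Set (Finset V)) : Prop :=
  ∃ τ σ, IsFreeFace X τ σ ∧ Y = X \ {τ, σ}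

/-- `X` collapses to `Y` via a finite sequence of elementary collapses. -/
def CollapsesTo {V : Type*} [DecidableEq V] (X Y : Set (Finset V)) : Prop :=
  Relation.ReflTransGen CollapseStep X Y

namespace Stmt2Aux
set_option linter.unusedSectionVars false

open Finset

variable {V : Type*} [Fintype V] [DecidableEq V]

lemma compl_ssub {s t : Finset V} (h : s ⊂ t) : tᶜ ⊂ sᶜ :=
  compl_lt_compl_iff_lt.mpr h

lemma ssub_of_compl {s t : Finset V} (h : tᶜ ⊂ sᶜ) : s ⊂ t := by
  have := compl_lt_compl_iff_lt.mpr h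
  simpa using this

lemma compl_eq_iff {s t : Finset V} : sᶜ = t ↔ s = tᶜ := by
  constructor
  · rintro rfl; rw [compl_compl]
  · rintro rfl; rw [compl_compl]

/-- missing facet -/
def MissF (X : Set (Finset V)) (v : V) : Prop := ({v} : Finset V)ᶜ ∉ X

/-- missing codim-2 face -/
def MissE (X : Set (Finset V)) (a b : V) : Prop := a ≠ b ∧ ({a, b} : Finset V)ᶜ ∉ X

lemma MissE.symm {X : Set (Finset V)} {a b : V} (h : MissE X a b) : MissE X b a := by
  obtain ⟨h1, h2⟩ := h
  exact ⟨h1.symm, by rwa [Finset.pair_comm]⟩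

def Inv (X : Set (Finset V)) : Prop :=
  IsComplex X ∧ (X = Set.univ ∨
    ((Finset.univ : Finset V) ∉ X ∧ (∃ v, MissF X v) ∧
     (∀ a b, MissE X a b → MissF X a ∧ MissF X b) ∧
     (∀ u v, MissF X u → MissF X v → Relation.ReflTransGen (MissE X) u v)))

lemma isComplex_step {X Y : Set (Finset V)} (hX : IsComplex X) (h : CollapseStep X Y) :
    IsComplex Y := by
  obtain ⟨τ, σ, ⟨hτ, hne, hσ, hss, huniq⟩, rfl⟩ := h
  rintro ρ ⟨hρX, hρn⟩ π hπ
  refine ⟨hX ρ hρX π hπ, ?_⟩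
  simp only [Set.mem_insert_iff, Set.mem_singleton_iff] at hρn
  push_neg at hρn
  simp only [Set.mem_insert_iff, Set.mem_singleton_iff]
  push_neg
  constructor
  · intro heq
    have hsub : τ ⊂ ρ := by
      rw [Finset.ssubset_iff_subset_ne]
      exact ⟨heq ▸ hπ, fun hh => hρn.1 hh.symm⟩
    exact hρn.2 (huniq ρ hρX hsub)
  · intro heq
    have hsub : τ ⊂ ρ := lt_of_lt_of_le hss (heq ▸ hπ)
    exact hρn.2 (huniq ρ hρX hsub)

lemma free_card {X : Set (Finset V)} {τ σ : Finset V} (hX : IsComplex X)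
    (h : IsFreeFace X τ σ) : σ.card = τ.card + 1 := by
  obtain ⟨hτ, hne, hσ, hss, huniq⟩ := h
  obtain ⟨x, hxσ, hxτ⟩ := Finset.exists_of_ssubset hss
  have hsub : insert x τ ⊆ σ := Finset.insert_subset hxσ hss.subset
  have hmem : insert x τ ∈ X := hX σ hσ _ hsub
  have heq := huniq _ hmem (Finset.ssubset_insert hxτ)
  rw [← heq, Finset.card_insert_of_notMem hxτ]

lemma pair_subset_triple {x y a b w : V} (hxy : x ≠ y)
    (h : ({x, y} : Finset V) ⊆ {a, b, w}) :
    ({x, y} : Finset V) = {a, b} ∨ ({x, y} : Finset V) = {a, w} ∨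
      ({x, y} : Finset V) = {b, w} := by
  have hx : x = a ∨ x = b ∨ x = w := by
    simpa using h (Finset.mem_insert_self x {y})
  have hy : y = a ∨ y = b ∨ y = w := by
    simpa using h (by simp : y ∈ ({x, y} : Finset V))
  rcases hx with rfl | rfl | rfl <;> rcases hy with rfl | rfl | rfl <;>
    first
      | exact absurd rfl hxy
      | exact Or.inl rfl
      | exact Or.inr (Or.inl rfl)
      | exact Or.inr (Or.inr rfl)
      | exact Or.inl (Finset.pair_comm _ _)
      | exact Or.inr (Or.inl (Finset.pair_comm _ _))
      | exact Or.inr (Or.inr (Finset.pair_comm _ _))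

omit [Fintype V] in
lemma compl_sub' {s t : Finset V} [Fintype V] (h : s ⊆ t) : tᶜ ⊆ sᶜ := by
  intro x hx
  simp only [Finset.mem_compl] at hx ⊢
  exact fun hxs => hx (h hxs)

lemma pair_card_le {p q : V} : ({p, q} : Finset V).card ≤ 2 :=
  le_trans (Finset.card_insert_le _ _) (by simp)

lemma inv_step {X Y : Set (Finset V)} (hI : Inv X) (h : CollapseStep X Y) : Inv Y := by
  obtain ⟨hcpx, hbr⟩ := hI
  have hcpxY : IsComplex Y := isComplex_step hcpx h
  obtain ⟨τ, σ, hfree, rfl⟩ := h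
  obtain ⟨hτX, hτne, hσX, hss, huniq⟩ := hfree
  have hcard : σ.card = τ.card + 1 := free_card hcpx ⟨hτX, hτne, hσX, hss, huniq⟩
  have hcc : σᶜ ⊂ τᶜ := compl_ssub hss
  have hccard : τᶜ.card = σᶜ.card + 1 := by
    have h1 := Finset.card_compl τ
    have h2 := Finset.card_compl σ
    have h3 : σ.card ≤ Fintype.card V := by
      simpa [Finset.card_univ] using Finset.card_le_univ σ
    omega
  obtain ⟨w, hwτ, hwσ⟩ := Finset.exists_of_ssubset hcc
  have hins : τᶜ = insert w σᶜ := by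
    refine (Finset.eq_of_subset_of_card_le (Finset.insert_subset hwτ hcc.subset) ?_).symm
    rw [Finset.card_insert_of_notMem hwσ]; omega
  refine ⟨hcpxY, Or.inr ?_⟩
  have hYsub : (X \ {τ, σ} : Set (Finset V)) ⊆ X := Set.diff_subset
  have hmemY : ∀ ρ : Finset V, ρ ∈ X \ {τ, σ} ↔ ρ ∈ X ∧ ρ ≠ τ ∧ ρ ≠ σ := by
    intro ρ; simp only [Set.mem_diff, Set.mem_insert_iff, Set.mem_singleton_iff]; tauto
  rcases hbr with rfl | ⟨hXuniv, ⟨v₀, hv₀⟩, hends, hconn⟩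
  · -- X = Set.univ : then σ = univ, τ = {x}ᶜ
    have hσuniv : σ = Finset.univ := by
      have h1 : τ ⊂ Finset.univ := lt_of_lt_of_le hss (Finset.subset_univ σ)
      exact (huniq Finset.univ (Set.mem_univ _) h1).symm
    subst hσuniv
    have hτc1 : τᶜ.card = 1 := by rw [hccard]; simp
    obtain ⟨x, hx⟩ := Finset.card_eq_one.mp hτc1
    have hτeq : τ = ({x} : Finset V)ᶜ := by rw [← compl_compl τ, hx]
    have hFx : ∀ z : V, MissF (Set.univ \ {τ, Finset.univ} : Set (Finset V)) z → z = x := by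
      intro z hz
      unfold MissF at hz
      rw [hmemY] at hz
      by_cases hzτ : ({z} : Finset V)ᶜ = τ
      · rw [hτeq] at hzτ
        have h5 : ({z} : Finset V) = {x} := compl_inj_iff.mp hzτ
        simpa using h5
      · exfalso; apply hz
        refine ⟨Set.mem_univ _, hzτ, ?_⟩
        intro hc
        have h5 : ({z} : Finset V) = ∅ := by
          rw [← compl_compl ({z} : Finset V), hc, Finset.compl_univ]
        simpa using h5
    refine ⟨?_, ⟨x, ?_⟩, ?_, ?_⟩
    · simp
    · intro hmem
      rw [hmemY] at hmem
      exact hmem.2.1 hτeq.symm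
    · rintro a b ⟨hab, hmem⟩
      exfalso
      apply hmem
      rw [hmemY]
      refine ⟨Set.mem_univ _, ?_, ?_⟩
      · rw [hτeq]
        intro hc
        have h5 : ({a, b} : Finset V) = {x} := compl_inj_iff.mp hc
        have ha : a = x := by
          have : a ∈ ({x} : Finset V) := h5 ▸ (Finset.mem_insert_self a {b})
          simpa using this
        have hb : b = x := by
          have : b ∈ ({x} : Finset V) := h5 ▸ (by simp : b ∈ ({a, b} : Finset V))
          simpa using this
        exact hab (ha.trans hb.symm)
      · intro hc
        have h5 : ({a, b} : Finset V) = ∅ := by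
          rw [← compl_compl ({a, b} : Finset V), hc, Finset.compl_univ]
        simpa using (h5 ▸ (Finset.mem_insert_self a {b}) : a ∈ (∅ : Finset V))
    · intro u v hu hv
      rw [hFx u hu, hFx v hv]
  · -- X ≠ univ branch
    have hσne : σ ≠ Finset.univ := fun hc => hXuniv (hc ▸ hσX)
    have hσc0 : σᶜ ≠ ∅ := by
      intro he; apply hσne; rw [← compl_compl σ, he, Finset.compl_empty]
    have hcard1 : 1 ≤ σᶜ.card :=
      Finset.card_pos.mpr (Finset.nonempty_iff_ne_empty.mpr hσc0)
    have hnotunivY : (Finset.univ : Finset V) ∉ X \ {τ, σ} := fun hc => hXuniv (hYsub hc)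
    rcases (by omega : σᶜ.card = 1 ∨ σᶜ.card = 2 ∨ 3 ≤ σᶜ.card) with h1 | h2 | h3
    · -- σ is a facet {v}ᶜ, τ = {w,v}ᶜ
      obtain ⟨v, hv⟩ := Finset.card_eq_one.mp h1
      have hσeq : σ = ({v} : Finset V)ᶜ := by rw [← compl_compl σ, hv]
      rw [hv] at hwσ
      simp only [Finset.mem_singleton] at hwσ
      have hwv : w ≠ v := hwσ
      have hτceq : τᶜ = ({w, v} : Finset V) := by rw [hins, hv]
      have hMw : MissF X w := by
        intro hmem
        have hwss : ({w} : Finset V) ⊂ ({w, v} : Finset V) := by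
          refine ⟨by simp, fun hc => ?_⟩
          have : v ∈ ({w} : Finset V) := hc (by simp)
          simp only [Finset.mem_singleton] at this
          exact hwv this.symm
        have hsubw : τ ⊂ ({w} : Finset V)ᶜ :=
          ssub_of_compl (by rw [compl_compl, hτceq]; exact hwss)
        have h5 := huniq _ hmem hsubw
        rw [hσeq] at h5
        have h6 : ({w} : Finset V) = {v} := compl_inj_iff.mp h5
        exact hwv (by simpa using h6)
      have hBz : ∀ z : V, ({z} : Finset V)ᶜ ≠ τ := by
        intro z hc
        have h5 : ({z} : Finset V) = ({w, v} : Finset V) := by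
          rw [← compl_compl ({z} : Finset V), hc, hτceq]
        have hcc2 : (1 : ℕ) = ({w, v} : Finset V).card := by
          rw [← Finset.card_singleton z, h5]
        rw [Finset.card_insert_of_notMem (by simpa using hwv), Finset.card_singleton] at hcc2
        omega
      have hCz : ∀ z : V, (({z} : Finset V)ᶜ = σ ↔ z = v) := by
        intro z
        rw [hσeq, compl_inj_iff, Finset.singleton_inj]
      have hFacetY : ∀ z : V, MissF (X \ {τ, σ}) z ↔ (MissF X z ∨ z = v) := by
        intro z
        unfold MissF
        rw [hmemY]
        constructor
        · intro hz
          by_cases hzv : z = v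
          · exact Or.inr hzv
          · left; intro hzX
            exact hz ⟨hzX, hBz z, fun hc => hzv ((hCz z).mp hc)⟩
        · rintro (hz | rfl)
          · exact fun hc => hz hc.1
          · exact fun hc => hc.2.2 ((hCz z).mpr rfl)
      have hMissEY : ∀ a b : V,
          MissE (X \ {τ, σ}) a b ↔ (MissE X a b ∨ (a ≠ b ∧ ({a, b} : Finset V) = {w, v})) := by
        intro a b
        unfold MissE
        constructor
        · rintro ⟨hab, hmem⟩
          by_cases hx : ({a, b} : Finset V)ᶜ ∈ X
          · rw [hmemY] at hmem
            have hor : ({a, b} : Finset V)ᶜ = τ ∨ ({a, b} : Finset V)ᶜ = σ := by tauto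
            rcases hor with hc | hc
            · right
              refine ⟨hab, ?_⟩
              rw [← compl_compl ({a, b} : Finset V), hc, hτceq]
            · exfalso
              have h5 : ({a, b} : Finset V) = {v} := by
                rw [← compl_compl ({a, b} : Finset V), hc, hσeq, compl_compl]
              have ha : a = v := by
                have : a ∈ ({v} : Finset V) := h5 ▸ (Finset.mem_insert_self a {b})
                simpa using this
              have hb : b = v := by
                have : b ∈ ({v} : Finset V) := h5 ▸ (by simp : b ∈ ({a, b} : Finset V))
                simpa using this
              exact hab (ha.trans hb.symm)
          · exact Or.inl ⟨hab, hx⟩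
        · rintro (⟨hab, hmem⟩ | ⟨hab, heq⟩)
          · exact ⟨hab, fun hc => hmem (hYsub hc)⟩
          · refine ⟨hab, fun hc => ?_⟩
            rw [hmemY] at hc
            apply hc.2.1
            rw [← hτceq] at heq
            rw [← compl_compl τ, ← heq]
      refine ⟨hnotunivY, ⟨v₀, (hFacetY v₀).mpr (Or.inl hv₀)⟩, ?_, ?_⟩
      · rintro a b hab
        rw [hMissEY] at hab
        rcases hab with hab | ⟨hab, heq⟩
        · obtain ⟨ha, hb⟩ := hends a b hab
          exact ⟨(hFacetY a).mpr (Or.inl ha), (hFacetY b).mpr (Or.inl hb)⟩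
        · have hw' : MissF (X \ {τ, σ}) w := (hFacetY w).mpr (Or.inl hMw)
          have hv' : MissF (X \ {τ, σ}) v := (hFacetY v).mpr (Or.inr rfl)
          have ha : a = w ∨ a = v := by
            have : a ∈ ({w, v} : Finset V) := heq ▸ (Finset.mem_insert_self a {b})
            simpa using this
          have hb : b = w ∨ b = v := by
            have : b ∈ ({w, v} : Finset V) := heq ▸ (by simp : b ∈ ({a, b} : Finset V))
            simpa using this
          constructor
          · rcases ha with rfl | rfl
            exacts [hw', hv']
          · rcases hb with rfl | rfl
            exacts [hw', hv']
      · have hlift : ∀ p q : V, Relation.ReflTransGen (MissE X) p q →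
            Relation.ReflTransGen (MissE (X \ {τ, σ})) p q := by
          intro p q hpq
          refine Relation.ReflTransGen.mono ?_ _ _ hpq
          intro x y hxy
          rw [hMissEY]; exact Or.inl hxy
        have hedge_wv : MissE (X \ {τ, σ}) w v := by
          rw [hMissEY]; exact Or.inr ⟨hwv, rfl⟩
        intro p q hp hq
        rw [hFacetY] at hp hq
        rcases hp with hp | rfl
        · rcases hq with hq | rfl
          · exact hlift _ _ (hconn p q hp hq)
          · exact Relation.ReflTransGen.tail (hlift _ _ (hconn p w hp hMw)) hedge_wv
        · rcases hq with hq | rfl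
          · exact Relation.ReflTransGen.head hedge_wv.symm (hlift _ _ (hconn w q hMw hq))
          · exact Relation.ReflTransGen.refl
    · -- σᶜ = {a,b}, τᶜ = {w,a,b}
      obtain ⟨a, b, hab, hvab⟩ := Finset.card_eq_two.mp h2
      have hσeq : σ = ({a, b} : Finset V)ᶜ := by rw [← compl_compl σ, hvab]
      rw [hvab] at hwσ
      have hττc : τᶜ.card = 3 := by rw [hccard, h2]
      have hτceq : τᶜ = insert w ({a, b} : Finset V) := by rw [hins, hvab]
      have haτ : a ∈ τᶜ := by rw [hτceq]; simp
      have hbτ : b ∈ τᶜ := by rw [hτceq]; simp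
      have hMa : MissF X a := by
        intro hmem
        have hass : ({a} : Finset V) ⊂ τᶜ := by
          refine ⟨by simpa using haτ, fun hc => ?_⟩
          have : b ∈ ({a} : Finset V) := hc hbτ
          simp only [Finset.mem_singleton] at this
          exact hab this.symm
        have hsuba : τ ⊂ ({a} : Finset V)ᶜ := ssub_of_compl (by rwa [compl_compl])
        have h5 := huniq _ hmem hsuba
        rw [hσeq] at h5
        have h6 : ({a} : Finset V) = {a, b} := compl_inj_iff.mp h5
        have : b ∈ ({a} : Finset V) := by rw [h6]; simp
        simp only [Finset.mem_singleton] at this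
        exact hab this.symm
      have hMb : MissF X b := by
        intro hmem
        have hbss : ({b} : Finset V) ⊂ τᶜ := by
          refine ⟨by simpa using hbτ, fun hc => ?_⟩
          have : a ∈ ({b} : Finset V) := hc haτ
          simp only [Finset.mem_singleton] at this
          exact hab this
        have hsubb : τ ⊂ ({b} : Finset V)ᶜ := ssub_of_compl (by rwa [compl_compl])
        have h5 := huniq _ hmem hsubb
        rw [hσeq] at h5
        have h6 : ({b} : Finset V) = {a, b} := compl_inj_iff.mp h5
        have : a ∈ ({b} : Finset V) := by rw [h6]; simp
        simp only [Finset.mem_singleton] at this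
        exact hab this
      have hFz : ∀ z : V, MissF (X \ {τ, σ}) z ↔ MissF X z := by
        intro z
        unfold MissF
        rw [hmemY]
        constructor
        · intro hz hzX
          apply hz
          refine ⟨hzX, ?_, ?_⟩
          · intro hc
            have h5 : ({z} : Finset V) = τᶜ := by rw [← compl_compl ({z} : Finset V), hc]
            have : (1 : ℕ) = 3 := by rw [← Finset.card_singleton z, h5, hττc]
            omega
          · intro hc
            have h5 : ({z} : Finset V) = σᶜ := by rw [← compl_compl ({z} : Finset V), hc]
            have : (1 : ℕ) = 2 := by rw [← Finset.card_singleton z, h5, h2]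
            omega
        · exact fun hz hc => hz hc.1
      have hEY : ∀ p q : V,
          MissE (X \ {τ, σ}) p q ↔ (MissE X p q ∨ (p ≠ q ∧ ({p, q} : Finset V) = {a, b})) := by
        intro p q
        unfold MissE
        constructor
        · rintro ⟨hpq, hmem⟩
          by_cases hx : ({p, q} : Finset V)ᶜ ∈ X
          · rw [hmemY] at hmem
            have hor : ({p, q} : Finset V)ᶜ = τ ∨ ({p, q} : Finset V)ᶜ = σ := by tauto
            rcases hor with hc | hc
            · exfalso
              have h4 : ({p, q} : Finset V) = τᶜ := by rw [← compl_compl ({p, q} : Finset V), hc]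
              have h5 : ({p, q} : Finset V).card = 3 := by rw [h4, hττc]
              have h6 := pair_card_le (V := V) (p := p) (q := q)
              omega
            · right
              refine ⟨hpq, ?_⟩
              rw [← compl_compl ({p, q} : Finset V), hc, hσeq, compl_compl]
          · exact Or.inl ⟨hpq, hx⟩
        · rintro (⟨hpq, hmem⟩ | ⟨hpq, heq⟩)
          · exact ⟨hpq, fun hc => hmem (hYsub hc)⟩
          · refine ⟨hpq, fun hc => ?_⟩
            rw [hmemY] at hc
            apply hc.2.2
            rw [hσeq, ← heq]
      refine ⟨hnotunivY, ⟨v₀, (hFz v₀).mpr hv₀⟩, ?_, ?_⟩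
      · rintro p q hpq
        rw [hEY] at hpq
        rcases hpq with hpq | ⟨hpq, heq⟩
        · obtain ⟨hp', hq'⟩ := hends p q hpq
          exact ⟨(hFz p).mpr hp', (hFz q).mpr hq'⟩
        · have hA := (hFz a).mpr hMa
          have hB := (hFz b).mpr hMb
          have hp : p = a ∨ p = b := by
            have : p ∈ ({a, b} : Finset V) := heq ▸ (Finset.mem_insert_self p {q})
            simpa using this
          have hq : q = a ∨ q = b := by
            have : q ∈ ({a, b} : Finset V) := heq ▸ (by simp : q ∈ ({p, q} : Finset V))
            simpa using this
          constructor
          · rcases hp with rfl | rfl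
            exacts [hA, hB]
          · rcases hq with rfl | rfl
            exacts [hA, hB]
      · intro p q hp hq
        refine Relation.ReflTransGen.mono ?_ _ _ (hconn p q ((hFz p).mp hp) ((hFz q).mp hq))
        intro x y hxy
        rw [hEY]; exact Or.inl hxy
    · -- σᶜ.card ≥ 3 : nothing changes
      have hFz : ∀ z : V, MissF (X \ {τ, σ}) z ↔ MissF X z := by
        intro z
        unfold MissF
        rw [hmemY]
        constructor
        · intro hz hzX
          apply hz
          refine ⟨hzX, ?_, ?_⟩
          · intro hc
            have h5 : ({z} : Finset V) = τᶜ := by rw [← compl_compl ({z} : Finset V), hc]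
            have : (1 : ℕ) = τᶜ.card := by rw [← Finset.card_singleton z, h5]
            omega
          · intro hc
            have h5 : ({z} : Finset V) = σᶜ := by rw [← compl_compl ({z} : Finset V), hc]
            have : (1 : ℕ) = σᶜ.card := by rw [← Finset.card_singleton z, h5]
            omega
        · exact fun hz hc => hz hc.1
      have hEY : ∀ p q : V, MissE (X \ {τ, σ}) p q ↔ MissE X p q := by
        intro p q
        unfold MissE
        constructor
        · rintro ⟨hpq, hmem⟩
          refine ⟨hpq, fun hx => ?_⟩
          apply hmem
          rw [hmemY]
          refine ⟨hx, ?_, ?_⟩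
          · intro hc
            have h5 : ({p, q} : Finset V) = τᶜ := by rw [← compl_compl ({p, q} : Finset V), hc]
            have h6 := pair_card_le (V := V) (p := p) (q := q)
            rw [h5] at h6
            omega
          · intro hc
            have h5 : ({p, q} : Finset V) = σᶜ := by rw [← compl_compl ({p, q} : Finset V), hc]
            have h6 := pair_card_le (V := V) (p := p) (q := q)
            rw [h5] at h6
            omega
        · rintro ⟨hpq, hmem⟩
          exact ⟨hpq, fun hc => hmem (hYsub hc)⟩
      refine ⟨hnotunivY, ⟨v₀, (hFz v₀).mpr hv₀⟩, ?_, ?_⟩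
      · rintro p q hpq
        rw [hEY] at hpq
        obtain ⟨hp', hq'⟩ := hends p q hpq
        exact ⟨(hFz p).mpr hp', (hFz q).mpr hq'⟩
      · intro p q hp hq
        refine Relation.ReflTransGen.mono ?_ _ _ (hconn p q ((hFz p).mp hp) ((hFz q).mp hq))
        intro x y hxy
        rw [hEY]; exact hxy

lemma inv_collapse {X Y : Set (Finset V)} (hX : Inv X) (h : CollapsesTo X Y) : Inv Y := by
  induction h with
  | refl => exact hX
  | tail _ hstep ih => exact inv_step ih hstep

end Stmt2Aux

/-- `X` has dimension exactly `d`: some face has `d + 1` vertices, and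
every face has at most `d + 1` vertices. -/
def Dim {V : Type*} [DecidableEq V] (X : Set (Finset V)) (d : ℕ) : Prop :=
  (∃ σ ∈ X, σ.card = d + 1) ∧ ∀ σ ∈ X, σ.card ≤ d + 1

/-- If the simplex on `n ≥ 4` vertices collapses to a complex `Y` of dimension at least
`n - 3` (i.e. `Y` has a face with at least `n - 2` vertices), then `Y` has a free face. -/
theorem stmt_2 {V : Type*} [Fintype V] [DecidableEq V] (n : ℕ) (hn : 4 ≤ n)
    (hcard : Fintype.card V = n) (Y : Set (Finset V))
    (h : CollapsesTo (Set.univ : Set (Finset V)) Y)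
    (hdim : ∃ σ ∈ Y, n - 2 ≤ σ.card) :
    HasFreeFace Y := by
  open Stmt2Aux Finset in
  by_contra hfree
  unfold HasFreeFace at hfree
  push_neg at hfree
  have hI : Stmt2Aux.Inv Y := inv_collapse ⟨fun σ _ τ _ => Set.mem_univ τ, Or.inl rfl⟩ h
  obtain ⟨hcpx, hbr⟩ := hI
  rcases hbr with rfl | ⟨hnuniv, ⟨v₀, hv₀⟩, hends, hconn⟩
  · -- Y = Set.univ : a facet is a free face
    obtain ⟨v⟩ : Nonempty V := Fintype.card_pos_iff.mp (by omega)
    refine hfree (({v} : Finset V)ᶜ) Finset.univ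
      ⟨Set.mem_univ _, ?_, Set.mem_univ _, ?_, ?_⟩
    · rw [← Finset.card_pos, Finset.card_compl, Finset.card_singleton, hcard]
      omega
    · refine ssub_of_compl ?_
      rw [compl_compl, Finset.compl_univ]
      refine ⟨Finset.empty_subset _, fun hc => ?_⟩
      simpa using hc (Finset.mem_singleton_self v)
    · intro ρ _ hρ
      have hcc := compl_ssub hρ
      rw [compl_compl] at hcc
      have he : ρᶜ = ∅ := Finset.ssubset_singleton_iff.mp hcc
      rw [← compl_compl ρ, he, Finset.compl_empty]
  · -- main case
    -- Step A: every facet is missing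
    have hallF : ∀ z : V, MissF Y z := by
      intro z
      by_contra hz
      have hzY : ({z} : Finset V)ᶜ ∈ Y := not_not.mp hz
      have hz0 : v₀ ≠ z := by rintro rfl; exact hv₀ hzY
      refine hfree (({z, v₀} : Finset V)ᶜ) (({z} : Finset V)ᶜ) ⟨?_, ?_, hzY, ?_, ?_⟩
      · exact hcpx _ hzY _ (compl_sub' (by simp))
      · rw [← Finset.card_pos, Finset.card_compl, hcard]
        have := pair_card_le (V := V) (p := z) (q := v₀)
        omega
      · refine ssub_of_compl ?_
        rw [compl_compl, compl_compl]
        refine ⟨by simp, fun hc => ?_⟩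
        have : v₀ ∈ ({z} : Finset V) := hc (by simp)
        simp only [Finset.mem_singleton] at this
        exact hz0 this
      · intro ρ hρ hss
        have hcc := compl_ssub hss
        rw [compl_compl] at hcc
        have hlt : ρᶜ.card < 2 :=
          lt_of_lt_of_le (Finset.card_lt_card hcc) (pair_card_le (V := V) (p := z) (q := v₀))
        rcases (by omega : ρᶜ.card = 0 ∨ ρᶜ.card = 1) with h0 | h1
        · exfalso
          have : ρ = Finset.univ := by
            rw [← compl_compl ρ, Finset.card_eq_zero.mp h0, Finset.compl_empty]
          exact hnuniv (this ▸ hρ)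
        · obtain ⟨x, hx⟩ := Finset.card_eq_one.mp h1
          have hxmem : x ∈ ({z, v₀} : Finset V) := hcc.subset (by rw [hx]; simp)
          have hρeq : ρ = ({x} : Finset V)ᶜ := by rw [← compl_compl ρ, hx]
          rcases (by simpa using hxmem : x = z ∨ x = v₀) with rfl | rfl
          · rw [hρeq]
          · exfalso; exact hv₀ (hρeq ▸ hρ)
    -- Step B: the surviving big face has exactly n - 2 vertices
    obtain ⟨σ₀, hσ₀Y, hσ₀c⟩ := hdim
    have hσ₀le : σ₀.card ≤ n := by
      rw [← hcard, ← Finset.card_univ]; exact Finset.card_le_univ σ₀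
    have hccσ : σ₀ᶜ.card = n - σ₀.card := by rw [Finset.card_compl, hcard]
    have h1n : σ₀.card ≠ n := by
      intro hc
      have : σ₀ = Finset.univ := Finset.eq_univ_of_card σ₀ (by rw [hc, hcard])
      exact hnuniv (this ▸ hσ₀Y)
    have h2n : σ₀.card ≠ n - 1 := by
      intro hc
      have hcc1 : σ₀ᶜ.card = 1 := by omega
      obtain ⟨x, hx⟩ := Finset.card_eq_one.mp hcc1
      have : σ₀ = ({x} : Finset V)ᶜ := by rw [← compl_compl σ₀, hx]
      exact hallF x (this ▸ hσ₀Y)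
    have h4 : σ₀ᶜ.card = 2 := by omega
    obtain ⟨a₀, b₀, hab₀, hvab₀⟩ := Finset.card_eq_two.mp h4
    have hE₀ : ({a₀, b₀} : Finset V)ᶜ ∈ Y := by
      have : σ₀ = ({a₀, b₀} : Finset V)ᶜ := by rw [← compl_compl σ₀, hvab₀]
      exact this ▸ hσ₀Y
    -- Step C: domination
    have hdom : ∀ a b ν : V, a ≠ b → ({a, b} : Finset V)ᶜ ∈ Y → ν ≠ a → ν ≠ b →
        (({a, ν} : Finset V)ᶜ ∈ Y ∨ ({b, ν} : Finset V)ᶜ ∈ Y) := by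
      intro a b ν hab hmem hνa hνb
      by_contra hboth
      push_neg at hboth
      obtain ⟨hna, hnb⟩ := hboth
      have hpair2 : ({a, b} : Finset V).card ≤ 2 := pair_card_le
      have hcard3 : ({ν, a, b} : Finset V).card ≤ 3 :=
        le_trans (Finset.card_insert_le _ _) (by omega)
      have htsub : ({a, b} : Finset V) ⊆ {ν, a, b} := by
        intro x hx; simp only [Finset.mem_insert, Finset.mem_singleton] at hx ⊢; tauto
      have htss : ({a, b} : Finset V) ⊂ ({ν, a, b} : Finset V) := by
        refine ⟨htsub, fun hc => ?_⟩
        have : ν ∈ ({a, b} : Finset V) := hc (by simp)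
        simp only [Finset.mem_insert, Finset.mem_singleton] at this
        rcases this with h' | h'
        exacts [hνa h', hνb h']
      refine hfree (({ν, a, b} : Finset V)ᶜ) (({a, b} : Finset V)ᶜ) ⟨?_, ?_, hmem, ?_, ?_⟩
      · exact hcpx _ hmem _ (compl_sub' htsub)
      · rw [← Finset.card_pos, Finset.card_compl, hcard]
        omega
      · refine ssub_of_compl ?_
        rw [compl_compl, compl_compl]
        exact htss
      · intro ρ hρ hss
        have hcc := compl_ssub hss
        rw [compl_compl] at hcc
        have hlt : ρᶜ.card < 3 := lt_of_lt_of_le (Finset.card_lt_card hcc) hcard3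
        rcases (by omega : ρᶜ.card = 0 ∨ ρᶜ.card = 1 ∨ ρᶜ.card = 2) with h0 | h1 | h2'
        · exfalso
          have : ρ = Finset.univ := by
            rw [← compl_compl ρ, Finset.card_eq_zero.mp h0, Finset.compl_empty]
          exact hnuniv (this ▸ hρ)
        · exfalso
          obtain ⟨x, hx⟩ := Finset.card_eq_one.mp h1
          have : ρ = ({x} : Finset V)ᶜ := by rw [← compl_compl ρ, hx]
          exact hallF x (this ▸ hρ)
        · obtain ⟨x, y, hxy, hxyeq⟩ := Finset.card_eq_two.mp h2'
          have hsub3 : ({x, y} : Finset V) ⊆ ({ν, a, b} : Finset V) := by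
            rw [← hxyeq]; exact hcc.subset
          have hρeq : ρ = ({x, y} : Finset V)ᶜ := by rw [← compl_compl ρ, hxyeq]
          rcases pair_subset_triple hxy hsub3 with hc | hc | hc
          · exfalso
            have : ρ = ({a, ν} : Finset V)ᶜ := by rw [hρeq, hc, Finset.pair_comm]
            exact hna (this ▸ hρ)
          · exfalso
            have : ρ = ({b, ν} : Finset V)ᶜ := by rw [hρeq, hc, Finset.pair_comm]
            exact hnb (this ▸ hρ)
          · rw [hρeq, hc]
    -- Step D: missing-edge adjacency is transitive along paths
    have htrans : ∀ p q : V, Relation.ReflTransGen (MissE Y) p q → p = q ∨ MissE Y p q := by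
      intro p q hpq
      induction hpq with
      | refl => exact Or.inl rfl
      | @tail b c hpb hbc ih =>
        rcases ih with rfl | hpb'
        · exact Or.inr hbc
        · by_cases hpc : p = c
          · exact Or.inl hpc
          · right
            refine ⟨hpc, fun hmem => ?_⟩
            rcases hdom p c b hpc hmem (Ne.symm hpb'.1) hbc.1 with hcase | hcase
            · exact hpb'.2 hcase
            · exact hbc.2 (by rwa [Finset.pair_comm] at hcase)
    -- Step E: contradiction
    rcases htrans a₀ b₀ (hconn a₀ b₀ (hallF a₀) (hallF b₀)) with hc | hc
    · exact hab₀ hc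
    · exact hc.2 hE₀
end

section
/- For every n, if the simplex Δ_{n−1} on n vertices collapses to a complex Y of dimension exactly 1, then Y has at least one free face. In other words, no collapsing sequence of the simplex gets stuck at dimension 1. -/
namespace Stmt3Aux

variable {V : Type*} [Fintype V] [DecidableEq V]

/-- Euler characteristic (including the empty face). -/
noncomputable def chi (X : Set (Finset V)) : ℤ :=
  ∑ σ ∈ (Set.toFinite X).toFinset, (-1 : ℤ) ^ σ.card

/-- Vertices of `X` are connected by edge paths in `X`. -/
def Conn (X : Set (Finset V)) : Prop :=
  ∀ a b : V, ({a} : Finset V) ∈ X → ({b} : Finset V) ∈ X →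
    Relation.ReflTransGen (fun u v => ({u, v} : Finset V) ∈ X) a b

lemma freeface_insert {X : Set (Finset V)} {τ σ : Finset V}
    (hX : IsComplex X) (h : IsFreeFace X τ σ) : ∃ a, a ∉ τ ∧ σ = insert a τ := by
  obtain ⟨hτ, hne, hσ, hss, huniq⟩ := h
  obtain ⟨a, ha, hna⟩ := Finset.exists_of_ssubset hss
  refine ⟨a, hna, ?_⟩
  have h1 : insert a τ ∈ X := hX σ hσ _ (Finset.insert_subset ha hss.subset)
  exact (huniq _ h1 (Finset.ssubset_insert hna)).symm

lemma complex_step {X Y : Set (Finset V)} (hX : IsComplex X) (h : CollapseStep X Y) :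
    IsComplex Y := by
  obtain ⟨τ, σ, hf, rfl⟩ := h
  obtain ⟨hτ, hne, hσ, hss, huniq⟩ := hf
  intro ρ hρ π hπ
  obtain ⟨hρX, hρn⟩ := hρ
  refine ⟨hX ρ hρX π hπ, ?_⟩
  intro hmem
  rcases hmem with h1 | h1
  · -- π = τ
    subst h1
    rcases eq_or_ne π ρ with rfl | hne'
    · exact hρn (Or.inl rfl)
    · exact hρn (Or.inr (huniq ρ hρX ⟨hπ, fun hsub => hne' (Finset.Subset.antisymm hπ hsub)⟩))
  · -- π = σ
    rcases h1 with rfl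
    rcases eq_or_ne π ρ with rfl | hne'
    · exact hρn (Or.inr rfl)
    · have hssρ : π ⊂ ρ := ⟨hπ, fun hsub => hne' (Finset.Subset.antisymm hπ hsub)⟩
      have : ρ = π := huniq ρ hρX (hss.trans hssρ)
      exact hne' this.symm

lemma chi_step {X Y : Set (Finset V)} (hX : IsComplex X) (h : CollapseStep X Y) :
    chi Y = chi X := by
  classical
  obtain ⟨τ, σ, hf, rfl⟩ := h
  obtain ⟨a, hna, hins⟩ := freeface_insert hX hf
  obtain ⟨hτ, hne, hσ, hss, huniq⟩ := hf
  have hτσ : τ ≠ σ := ne_of_ssubset hss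
  have hcard : σ.card = τ.card + 1 := by
    rw [hins, Finset.card_insert_of_notMem hna]
  have hτn : τ ∉ (Set.toFinite (X \ {τ, σ})).toFinset := by
    rw [Set.Finite.mem_toFinset]
    intro hmem
    exact hmem.2 (Or.inl rfl)
  have hσn : σ ∉ insert τ ((Set.toFinite (X \ {τ, σ})).toFinset) := by
    rw [Finset.mem_insert, Set.Finite.mem_toFinset]
    rintro (h' | h')
    · exact hτσ h'.symm
    · exact h'.2 (Or.inr rfl)
  have hXeq : (Set.toFinite X).toFinset
      = insert σ (insert τ ((Set.toFinite (X \ {τ, σ})).toFinset)) := by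
    ext ρ
    simp only [Set.Finite.mem_toFinset, Finset.mem_insert, Set.mem_diff,
      Set.mem_insert_iff, Set.mem_singleton_iff]
    constructor
    · intro hρ
      by_cases h1 : ρ = σ
      · exact Or.inl h1
      · by_cases h2 : ρ = τ
        · exact Or.inr (Or.inl h2)
        · exact Or.inr (Or.inr ⟨hρ, by tauto⟩)
    · rintro (rfl | rfl | h')
      · exact hσ
      · exact hτ
      · exact h'.1
  have hτn' : τ ∉ (Set.toFinite (X \ {τ, σ})).toFinset := hτn
  unfold chi
  rw [hXeq, Finset.sum_insert hσn, Finset.sum_insert hτn']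
  rw [hcard, pow_succ]
  ring

lemma conn_step {X Y : Set (Finset V)} (hX : IsComplex X) (hC : Conn X)
    (h : CollapseStep X Y) : Conn Y := by
  obtain ⟨τ, σ, hf, rfl⟩ := h
  obtain ⟨c0, hc0, hins⟩ := freeface_insert hX hf
  obtain ⟨hτ, hne, hσ, hss, huniq⟩ := hf
  have hcard : σ.card = τ.card + 1 := by
    rw [hins, Finset.card_insert_of_notMem hc0]
  have hmemY : ∀ ρ : Finset V, ρ ∈ X → ρ ≠ τ → ρ ≠ σ → ρ ∈ X \ {τ, σ} := by
    intro ρ h1 h2 h3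
    exact ⟨h1, by simp [h2, h3]⟩
  by_cases h1 : τ.card = 1
  · -- τ is a single vertex {c}; its only cofaces is the edge σ = {c0, c}
    obtain ⟨c, hc⟩ := Finset.card_eq_one.mp h1
    subst hc
    have hnbr : ∀ u : V, u ≠ c → ({c, u} : Finset V) ∈ X → u = c0 := by
      intro u hu hmem
      have hs : ({c} : Finset V) ⊂ {c, u} := by
        constructor
        · intro x hx; simp at hx; simp [hx]
        · intro hsub
          have := hsub (by simp : u ∈ ({c, u} : Finset V))
          simp at this
          exact hu this
      have heq := huniq _ hmem hs
      have hu' : u ∈ σ := heq ▸ (by simp : u ∈ ({c, u} : Finset V))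
      rw [hins] at hu'
      simp at hu'
      rcases hu' with h' | h'
      · exact h'
      · exact absurd h' hu
    set f : V → V := fun x => if x = c then c0 else x with hfdef
    have hedge : ∀ u v : V, ({u, v} : Finset V) ∈ X →
        Relation.ReflTransGen
          (fun p q => ({p, q} : Finset V) ∈ X \ {({c} : Finset V), σ}) (f u) (f v) := by
      intro u v huv
      by_cases hu : u = c <;> by_cases hv : v = c
      · have e1 : f u = c0 := by simp [hfdef, hu]
        have e2 : f v = c0 := by simp [hfdef, hv]
        rw [e1, e2]
      · have hvc0 : v = c0 := hnbr v hv (hu ▸ huv)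
        have e1 : f u = c0 := by simp [hfdef, hu]
        have e2 : f v = c0 := by simp [hfdef, hv, hvc0]
        rw [e1, e2]
      · have huc0 : u = c0 := hnbr u hu (by rw [Finset.pair_comm]; exact hv ▸ huv)
        have e1 : f u = c0 := by simp [hfdef, hu, huc0]
        have e2 : f v = c0 := by simp [hfdef, hv]
        rw [e1, e2]
      · have h2 : ({u, v} : Finset V) ≠ ({c} : Finset V) := by
          intro he
          apply hu
          have : u ∈ ({c} : Finset V) := he ▸ (by simp : u ∈ ({u, v} : Finset V))
          simpa using this
        have h3 : ({u, v} : Finset V) ≠ σ := by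
          intro he
          have : c ∈ ({u, v} : Finset V) := by
            rw [he, hins]; exact Finset.mem_insert_of_mem (by simp)
          simp at this
          tauto
        simp only [hfdef, if_neg hu, if_neg hv]
        exact Relation.ReflTransGen.single (hmemY _ huv h2 h3)
    intro a b ha hb
    have hac : a ≠ c := by
      intro e; subst e
      exact ha.2 (Or.inl rfl)
    have hbc : b ≠ c := by
      intro e; subst e
      exact hb.2 (Or.inl rfl)
    have p := hC a b ha.1 hb.1
    have lift : Relation.ReflTransGen
        (fun p q => ({p, q} : Finset V) ∈ X \ {({c} : Finset V), σ}) (f a) (f b) := by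
      clear ha hb hac hbc
      induction p with
      | refl => exact Relation.ReflTransGen.refl
      | tail _ hstep ih => exact ih.trans (hedge _ _ hstep)
    rwa [show f a = a from if_neg hac, show f b = b from if_neg hbc] at lift
  · -- τ has at least two vertices; no vertex is removed, at most one edge is removed
    have hc2 : 2 ≤ τ.card := by
      have := Finset.card_pos.mpr hne
      omega
    have hc0σ : c0 ∈ σ := by rw [hins]; exact Finset.mem_insert_self _ _
    have hedge : ∀ u v : V, ({u, v} : Finset V) ∈ X →
        Relation.ReflTransGen (fun p q => ({p, q} : Finset V) ∈ X \ {τ, σ}) u v := by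
      intro u v huv
      have hcle : ({u, v} : Finset V).card ≤ 2 := by
        have := Finset.card_insert_le u ({v} : Finset V)
        simpa using this
      have hσne : ({u, v} : Finset V) ≠ σ := by
        intro e; rw [e] at hcle; omega
      by_cases hτe : ({u, v} : Finset V) = τ
      · -- reroute via c0
        have huτ : u ∈ τ := hτe ▸ (by simp : u ∈ ({u, v} : Finset V))
        have hvτ : v ∈ τ := hτe ▸ (by simp : v ∈ ({u, v} : Finset V))
        have huσ : u ∈ σ := hss.subset huτ
        have hvσ : v ∈ σ := hss.subset hvτ
        have e1X : ({u, c0} : Finset V) ∈ X :=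
          hX σ hσ _ (Finset.insert_subset huσ (Finset.singleton_subset_iff.mpr hc0σ))
        have e2X : ({c0, v} : Finset V) ∈ X :=
          hX σ hσ _ (Finset.insert_subset hc0σ (Finset.singleton_subset_iff.mpr hvσ))
        have e1c : ({u, c0} : Finset V).card ≤ 2 := by
          have := Finset.card_insert_le u ({c0} : Finset V)
          simpa using this
        have e2c : ({c0, v} : Finset V).card ≤ 2 := by
          have := Finset.card_insert_le c0 ({v} : Finset V)
          simpa using this
        have e1Y : ({u, c0} : Finset V) ∈ X \ {τ, σ} := by
          refine hmemY _ e1X ?_ (by intro e; rw [e] at e1c; omega)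
          intro e
          exact hc0 (e ▸ (by simp : c0 ∈ ({u, c0} : Finset V)))
        have e2Y : ({c0, v} : Finset V) ∈ X \ {τ, σ} := by
          refine hmemY _ e2X ?_ (by intro e; rw [e] at e2c; omega)
          intro e
          exact hc0 (e ▸ (by simp : c0 ∈ ({c0, v} : Finset V)))
        exact Relation.ReflTransGen.head e1Y (Relation.ReflTransGen.single e2Y)
      · exact Relation.ReflTransGen.single (hmemY _ huv hτe hσne)
    intro a b ha hb
    have p := hC a b ha.1 hb.1
    clear ha hb
    induction p with
    | refl => exact Relation.ReflTransGen.refl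
    | tail _ hstep ih => exact ih.trans (hedge _ _ hstep)

end Stmt3Aux

open Stmt3Aux in
/-- If the simplex on `n` vertices (here: on an arbitrary finite vertex set) collapses
to a complex of dimension exactly `1`, then that complex has a free face. -/
theorem stmt_3 {V : Type*} [Fintype V] [DecidableEq V] (Y : Set (Finset V))
    (h : CollapsesTo (Set.univ : Set (Finset V)) Y)
    (hdim : Dim Y 1) :
    HasFreeFace Y := by
  classical
  have inv : IsComplex Y ∧ Conn Y ∧ chi Y = chi (Set.univ : Set (Finset V)) := by
    clear hdim
    unfold CollapsesTo at h
    induction h with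
    | refl =>
        refine ⟨fun _ _ _ _ => Set.mem_univ _, ?_, rfl⟩
        intro a b _ _
        exact Relation.ReflTransGen.single (Set.mem_univ _)
    | tail hR hstep ih =>
        obtain ⟨hc, hconn, hchi⟩ := ih
        exact ⟨complex_step hc hstep, conn_step hc hconn hstep,
          (chi_step hc hstep).trans hchi⟩
  obtain ⟨hcomp, hconn, hchi⟩ := inv
  by_contra hnf
  obtain ⟨⟨e₀, he₀, hcard₀⟩, hbound⟩ := hdim
  have hemp : (∅ : Finset V) ∈ Y := hcomp e₀ he₀ ∅ (Finset.empty_subset _)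
  obtain ⟨b₀, hb₀e⟩ := Finset.card_pos.mp (by omega : 0 < e₀.card)
  have hVne : Nonempty V := ⟨b₀⟩
  have hvertY : ∀ e : Finset V, e ∈ Y → ∀ a ∈ e, ({a} : Finset V) ∈ Y :=
    fun e he a ha => hcomp e he {a} (Finset.singleton_subset_iff.mpr ha)
  have hb₀ : ({b₀} : Finset V) ∈ Y := hvertY _ he₀ _ hb₀e
  -- Euler characteristic of Y is 0
  have hchi0 : chi Y = 0 := by
    rw [hchi]
    unfold chi
    have huniv : (Set.toFinite (Set.univ : Set (Finset V))).toFinset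
        = (Finset.univ : Finset V).powerset := by
      ext ρ
      simp [Set.Finite.mem_toFinset]
    rw [huniv]
    exact Finset.sum_powerset_neg_one_pow_card_of_nonempty Finset.univ_nonempty
  set W : Finset V := Finset.univ.filter (fun a => ({a} : Finset V) ∈ Y) with hW
  set E : Finset (Finset V) := Finset.univ.filter (fun e => e ∈ Y ∧ e.card = 2) with hE
  -- a nontrivial path has a first step
  have firststep : ∀ x : V,
      Relation.ReflTransGen (fun u v => ({u, v} : Finset V) ∈ Y) x b₀ →
      x ≠ b₀ → ∃ c, c ≠ x ∧ ({x, c} : Finset V) ∈ Y := by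
    intro x hp
    induction hp using Relation.ReflTransGen.head_induction_on with
    | refl => exact fun hxy => absurd rfl hxy
    | head hstep htail ih =>
        rename_i u w
        intro hxy
        by_cases hwu : w = u
        · subst hwu; exact ih hxy
        · exact ⟨w, hwu, hstep⟩
  -- every vertex of Y lies in at least two edges
  have deg2 : ∀ a ∈ W, 2 ≤ (E.filter (fun e => a ∈ e)).card := by
    intro a haW
    rw [hW, Finset.mem_filter] at haW
    have haY := haW.2
    have hedge1 : ∃ e ∈ E, a ∈ e := by
      by_cases hab : a = b₀
      · exact ⟨e₀, by simp [hE, he₀, hcard₀], hab ▸ hb₀e⟩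
      · obtain ⟨c, hca, hc⟩ := firststep a (hconn a b₀ haY hb₀) hab
        refine ⟨{a, c}, ?_, by simp⟩
        rw [hE, Finset.mem_filter]
        refine ⟨Finset.mem_univ _, hc, ?_⟩
        rw [Finset.card_insert_of_notMem (by simpa using fun e => hca e.symm)]
        simp
    obtain ⟨e1, he1E, hae1⟩ := hedge1
    have he1 : e1 ∈ Y ∧ e1.card = 2 := by
      rw [hE, Finset.mem_filter] at he1E; exact he1E.2
    have hsecond : ∃ e2, e2 ∈ Y ∧ e2.card = 2 ∧ a ∈ e2 ∧ e2 ≠ e1 := by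
      by_contra hno
      push_neg at hno
      apply hnf
      refine ⟨{a}, e1, haY, Finset.singleton_nonempty a, he1.1, ?_, ?_⟩
      · constructor
        · simpa using hae1
        · intro hsub
          have : e1.card ≤ 1 := by simpa using Finset.card_le_card hsub
          omega
      · intro ρ hρ hssρ
        have h2 : 2 ≤ ρ.card := by
          have := Finset.card_lt_card hssρ
          simp at this; omega
        have h2' : ρ.card ≤ 2 := hbound ρ hρ
        have haρ : a ∈ ρ := hssρ.subset (by simp)
        exact hno ρ hρ (le_antisymm h2' h2) haρ
    obtain ⟨e2, he2Y, he2c, hae2, hne12⟩ := hsecond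
    refine Finset.one_lt_card.mpr ⟨e1, ?_, e2, ?_, hne12.symm⟩
    · exact Finset.mem_filter.mpr ⟨he1E, hae1⟩
    · refine Finset.mem_filter.mpr ⟨?_, hae2⟩
      rw [hE, Finset.mem_filter]
      exact ⟨Finset.mem_univ _, he2Y, he2c⟩
  -- double counting: |W| ≤ |E|
  have hEfull : ∀ e ∈ E, (W.filter (fun a => a ∈ e)) = e := by
    intro e heE
    rw [hE, Finset.mem_filter] at heE
    ext a
    rw [Finset.mem_filter, hW, Finset.mem_filter]
    constructor
    · rintro ⟨_, h⟩; exact h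
    · intro hae
      exact ⟨⟨Finset.mem_univ _, hvertY _ heE.2.1 _ hae⟩, hae⟩
  have hcount : ∑ a ∈ W, (E.filter (fun e => a ∈ e)).card = 2 * E.card := by
    calc ∑ a ∈ W, (E.filter (fun e => a ∈ e)).card
        = ∑ a ∈ W, ∑ e ∈ E, (if a ∈ e then 1 else 0) := by
          refine Finset.sum_congr rfl fun a _ => ?_
          rw [Finset.card_filter]
      _ = ∑ e ∈ E, ∑ a ∈ W, (if a ∈ e then 1 else 0) := Finset.sum_comm
      _ = ∑ e ∈ E, (W.filter (fun a => a ∈ e)).card := by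
          refine Finset.sum_congr rfl fun e _ => ?_
          rw [Finset.card_filter]
      _ = ∑ e ∈ E, e.card := Finset.sum_congr rfl fun e he => by rw [hEfull e he]
      _ = ∑ e ∈ E, 2 := by
          refine Finset.sum_congr rfl fun e he => ?_
          rw [hE, Finset.mem_filter] at he
          exact he.2.2
      _ = 2 * E.card := by rw [Finset.sum_const, smul_eq_mul, mul_comm]
  have hWE : W.card ≤ E.card := by
    have h2W : 2 * W.card ≤ ∑ a ∈ W, (E.filter (fun e => a ∈ e)).card := by
      calc 2 * W.card = ∑ _a ∈ W, 2 := by rw [Finset.sum_const, smul_eq_mul, mul_comm]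
        _ ≤ _ := Finset.sum_le_sum deg2
    omega
  -- compute chi Y = 1 - |W| + |E|
  have hchiY : chi Y = 1 - (W.card : ℤ) + (E.card : ℤ) := by
    unfold chi
    have hFeq : (Set.toFinite Y).toFinset
        = insert ∅ ((W.image (fun a => ({a} : Finset V))) ∪ E) := by
      ext ρ
      simp only [Set.Finite.mem_toFinset, Finset.mem_insert,
        Finset.mem_union, Finset.mem_image]
      constructor
      · intro hρ
        have hc := hbound ρ hρ
        have h012 : ρ.card = 0 ∨ ρ.card = 1 ∨ ρ.card = 2 := by omega
        rcases h012 with h0 | h1 | h2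
        · left; exact Finset.card_eq_zero.mp h0
        · right; left
          obtain ⟨a, rfl⟩ := Finset.card_eq_one.mp h1
          exact ⟨a, by rw [hW, Finset.mem_filter]; exact ⟨Finset.mem_univ _, hρ⟩, rfl⟩
        · right; right
          rw [hE, Finset.mem_filter]
          exact ⟨Finset.mem_univ _, hρ, h2⟩
      · intro hρ
        rcases hρ with rfl | ⟨a, haW, rfl⟩ | hE'
        · exact hemp
        · rw [hW, Finset.mem_filter] at haW
          exact haW.2
        · rw [hE, Finset.mem_filter] at hE'
          exact hE'.2.1
    rw [hFeq]
    have hd1 : (∅ : Finset V) ∉ (W.image (fun a => ({a} : Finset V))) ∪ E := by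
      intro hmem
      rcases Finset.mem_union.mp hmem with h' | h'
      · obtain ⟨a, _, he⟩ := Finset.mem_image.mp h'
        exact Finset.singleton_ne_empty a he
      · rw [hE, Finset.mem_filter] at h'
        have := h'.2.2
        simp at this
    have hd2 : Disjoint (W.image (fun a => ({a} : Finset V))) E := by
      rw [Finset.disjoint_left]
      intro ρ h' h''
      obtain ⟨a, _, he⟩ := Finset.mem_image.mp h'
      rw [hE, Finset.mem_filter] at h''
      rw [← he] at h''
      simp at h''
    rw [Finset.sum_insert hd1, Finset.sum_union hd2]
    have hs1 : ∑ ρ ∈ W.image (fun a => ({a} : Finset V)), (-1 : ℤ) ^ ρ.card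
        = -(W.card : ℤ) := by
      rw [Finset.sum_image (fun a _ b _ h => Finset.singleton_injective h)]
      simp [Finset.sum_const]
    have hs2 : ∑ ρ ∈ E, (-1 : ℤ) ^ ρ.card = (E.card : ℤ) := by
      have h1 : ∀ ρ ∈ E, (-1 : ℤ) ^ ρ.card = 1 := by
        intro e he
        rw [hE, Finset.mem_filter] at he
        rw [he.2.2]
        norm_num
      rw [Finset.sum_congr rfl h1]
      simp
    rw [hs1, hs2]
    norm_num
    ring
  have : (W.card : ℤ) ≤ (E.card : ℤ) := by exact_mod_cast hWE
  rw [hchiY] at hchi0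
  linarith
end

section
/- Let X be a d-dimensional simplicial complex with d ≥ 1. Then X is d-collapsible if and only if X does not contain a d-dimensional core, i.e. if and only if there is no subcomplex L of X with dim L = d such that every (d − 1)-dimensional face of L is contained in at least two d-dimensional faces of L. -/
/-- A `d`-dimensional core: a `d`-dimensional complex in which every `(d-1)`-dimensional
face is contained in at least two `d`-dimensional faces. -/
def IsCore {V : Type*} [DecidableEq V] (L : Set (Finset V)) (d : ℕ) : Prop :=
  Dim L d ∧ ∀ τ ∈ L, τ.card = d →
    ∃ σ₁ ∈ L, ∃ σ₂ ∈ L, σ₁ ≠ σ₂ ∧ σ₁.card = d + 1 ∧ σ₂.card = d + 1 ∧ τ ⊆ σ₁ ∧ τ ⊆ σ₂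

lemma collapsesTo_subset {V : Type*} [DecidableEq V] {X Y : Set (Finset V)}
    (h : CollapsesTo X Y) : Y ⊆ X := by
  induction h with
  | refl => exact subset_rfl
  | tail _ step ih =>
    obtain ⟨τ, σ, _, rfl⟩ := step
    exact Set.diff_subset.trans ih

/-- From a core, extract a "pure" core in which every face of card ≤ d has at least two
distinct strict superfaces. -/
lemma exists_good_core {V : Type*} [DecidableEq V] {d : ℕ} {L : Set (Finset V)}
    (hLc : IsComplex L) (hcore : IsCore L d) :
    ∃ L' : Set (Finset V), L' ⊆ L ∧ IsComplex L' ∧ (∃ σ ∈ L', σ.card = d + 1) ∧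
      ∀ τ ∈ L', τ.card ≤ d →
        ∃ σ₁ ∈ L', ∃ σ₂ ∈ L', σ₁ ≠ σ₂ ∧ τ ⊂ σ₁ ∧ τ ⊂ σ₂ := by
  obtain ⟨⟨σ₀, hσ₀, hσ₀c⟩, hbound⟩ := hcore.1
  refine ⟨{ρ | ρ ∈ L ∧ ∃ σ ∈ L, σ.card = d + 1 ∧ ρ ⊆ σ}, fun ρ hρ => hρ.1, ?_, ?_, ?_⟩
  · intro σ hσ τ hτ
    exact ⟨hLc σ hσ.1 τ hτ, hσ.2.imp fun s hs => ⟨hs.1, hs.2.1, hτ.trans hs.2.2⟩⟩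
  · exact ⟨σ₀, ⟨hσ₀, σ₀, hσ₀, hσ₀c, subset_rfl⟩, hσ₀c⟩
  · rintro τ ⟨hτL, σ₁, hσ₁L, hσ₁c, hsub⟩ hτcard
    obtain ⟨τ', hττ', hτ'σ, hτ'c⟩ :=
      Finset.exists_subsuperset_card_eq hsub hτcard (by omega : d ≤ σ₁.card)
    have hτ'L : τ' ∈ L := hLc σ₁ hσ₁L τ' hτ'σ
    obtain ⟨s₁, hs₁, s₂, hs₂, hne, hc₁, hc₂, h₁, h₂⟩ := hcore.2 τ' hτ'L hτ'c
    have hss₁ : τ ⊂ s₁ := by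
      refine (hττ'.trans h₁).ssubset_of_ne ?_
      intro h; rw [h] at hτcard; omega
    have hss₂ : τ ⊂ s₂ := by
      refine (hττ'.trans h₂).ssubset_of_ne ?_
      intro h; rw [h] at hτcard; omega
    exact ⟨s₁, ⟨hs₁, s₁, hs₁, hc₁, subset_rfl⟩, s₂, ⟨hs₂, s₂, hs₂, hc₂, subset_rfl⟩,
      hne, hss₁, hss₂⟩

/-- A good core is preserved by collapses. -/
lemma core_preserved {V : Type*} [DecidableEq V] {d : ℕ} {X Y L' : Set (Finset V)}
    (hXb : ∀ σ ∈ X, σ.card ≤ d + 1)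
    (hL'c : IsComplex L')
    (htwo : ∀ τ ∈ L', τ.card ≤ d →
        ∃ σ₁ ∈ L', ∃ σ₂ ∈ L', σ₁ ≠ σ₂ ∧ τ ⊂ σ₁ ∧ τ ⊂ σ₂)
    (hcol : CollapsesTo X Y) (hL'X : L' ⊆ X) : L' ⊆ Y := by
  induction hcol with
  | refl => exact hL'X
  | @tail Z Z' hXZ step ih =>
    obtain ⟨τ, σ, hfree, rfl⟩ := step
    have hZX : Z ⊆ X := collapsesTo_subset hXZ
    intro ρ hρ
    refine ⟨ih hρ, ?_⟩
    have hτ : τ ∉ L' := by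
      intro hτL'
      have hτc : τ.card ≤ d := by
        have h1 := Finset.card_lt_card hfree.2.2.2.1
        have h2 := hXb σ (hZX hfree.2.2.1)
        omega
      obtain ⟨σ₁, hσ₁, σ₂, hσ₂, hne, hs₁, hs₂⟩ := htwo τ hτL' hτc
      exact hne ((hfree.2.2.2.2 σ₁ (ih hσ₁) hs₁).trans
        (hfree.2.2.2.2 σ₂ (ih hσ₂) hs₂).symm)
    intro hmem
    rcases hmem with h | h
    · exact hτ (h ▸ hρ)
    · rw [Set.mem_singleton_iff] at h
      subst h
      exact hτ (hL'c ρ hρ τ hfree.2.2.2.1.subset)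

/-- The collapsing direction: a complex with no core collapses to dimension < d. -/
lemma collapse_of_no_core {V : Type*} [Fintype V] [DecidableEq V] (d : ℕ) (hd : 1 ≤ d) :
    ∀ n : ℕ, ∀ X : Set (Finset V), IsComplex X → (∀ σ ∈ X, σ.card ≤ d + 1) →
      (¬ ∃ L, L ⊆ X ∧ IsComplex L ∧ IsCore L d) →
      ({σ ∈ X | σ.card = d + 1}).ncard ≤ n →
      ∃ Y, CollapsesTo X Y ∧ ∀ σ ∈ Y, σ.card ≤ d := by
  intro n
  induction n with
  | zero =>
    intro X hXc hXb hnc hcard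
    refine ⟨X, Relation.ReflTransGen.refl, fun σ hσ => ?_⟩
    have hfin : ({σ ∈ X | σ.card = d + 1}).Finite := Set.toFinite _
    have h0 : ({σ ∈ X | σ.card = d + 1}) = ∅ :=
      (Set.ncard_eq_zero hfin).mp (Nat.le_zero.mp hcard)
    have hne : σ.card ≠ d + 1 := by
      intro h
      have : σ ∈ ({σ ∈ X | σ.card = d + 1}) := ⟨hσ, h⟩
      rw [h0] at this
      exact this
    have := hXb σ hσ
    omega
  | succ n ih =>
    intro X hXc hXb hnc hcard
    by_cases hS : ∃ σ ∈ X, σ.card = d + 1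
    · obtain ⟨σS, hσS, hσSc⟩ := hS
      set L : Set (Finset V) := {ρ | ∃ σ ∈ X, σ.card = d + 1 ∧ ρ ⊆ σ} with hLdef
      have hLX : L ⊆ X := by rintro ρ ⟨σ, hσ, _, hsub⟩; exact hXc σ hσ ρ hsub
      have hLc : IsComplex L := by
        rintro σ hσ τ hτ
        exact hσ.imp fun s hs => ⟨hs.1, hs.2.1, hτ.trans hs.2.2⟩
      have hLdim : Dim L d :=
        ⟨⟨σS, ⟨σS, hσS, hσSc, subset_rfl⟩, hσSc⟩, fun σ hσ => hXb σ (hLX hσ)⟩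
      have hnotcore : ¬ IsCore L d := fun h => hnc ⟨L, hLX, hLc, h⟩
      rw [IsCore] at hnotcore
      push_neg at hnotcore
      obtain ⟨τ, hτL, hτc, hτbad⟩ := hnotcore hLdim
      obtain ⟨σ₁, hσ₁X, hσ₁c, hτσ₁⟩ := hτL
      have hτss : τ ⊂ σ₁ := by
        refine hτσ₁.ssubset_of_ne ?_
        intro h; rw [h] at hτc; omega
      have huniq : ∀ ρ ∈ X, τ ⊂ ρ → ρ = σ₁ := by
        intro ρ hρ hτρ
        have hρc : ρ.card = d + 1 := by
          have := Finset.card_lt_card hτρ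
          have := hXb ρ hρ
          omega
        by_contra hne
        exact hτbad σ₁ ⟨σ₁, hσ₁X, hσ₁c, subset_rfl⟩ ρ ⟨ρ, hρ, hρc, subset_rfl⟩
          (Ne.symm hne) hσ₁c hρc hτσ₁ hτρ.subset
      have hfree : IsFreeFace X τ σ₁ :=
        ⟨hLX ⟨σ₁, hσ₁X, hσ₁c, hτσ₁⟩, Finset.card_pos.mp (by omega), hσ₁X, hτss, huniq⟩
      set X' : Set (Finset V) := X \ {τ, σ₁} with hX'def
      have hstep : CollapseStep X X' := ⟨τ, σ₁, hfree, rfl⟩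
      have hX'c : IsComplex X' := by
        rintro ρ ⟨hρX, hρn⟩ ρ' hρ'
        refine ⟨hXc ρ hρX ρ' hρ', ?_⟩
        rintro (h | h)
        · subst h
          have hρτ : ρ' ⊂ ρ := by
            refine hρ'.ssubset_of_ne ?_
            rintro rfl
            exact hρn (Or.inl rfl)
          exact hρn (Or.inr (huniq ρ hρX hρτ))
        · rw [Set.mem_singleton_iff] at h
          have : ρ = σ₁ := (Finset.eq_of_subset_of_card_le (h ▸ hρ')
            (by rw [hσ₁c]; exact hXb ρ hρX)).symm
          exact hρn (Or.inr this)
      have hX'b : ∀ σ ∈ X', σ.card ≤ d + 1 := fun σ hσ => hXb σ hσ.1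
      have hX'nc : ¬ ∃ L, L ⊆ X' ∧ IsComplex L ∧ IsCore L d := by
        rintro ⟨L₀, hL₀, hc, hcore⟩
        exact hnc ⟨L₀, hL₀.trans Set.diff_subset, hc, hcore⟩
      have hcard' : ({σ ∈ X' | σ.card = d + 1}).ncard ≤ n := by
        have hsub : ({σ ∈ X' | σ.card = d + 1}) ⊆
            ({σ ∈ X | σ.card = d + 1}) \ {σ₁} := by
          rintro σ ⟨⟨hσX, hσn⟩, hσc⟩
          exact ⟨⟨hσX, hσc⟩, fun h => hσn (Or.inr h)⟩
        have hmem : σ₁ ∈ ({σ ∈ X | σ.card = d + 1}) := ⟨hσ₁X, hσ₁c⟩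
        have h1 := Set.ncard_le_ncard hsub (Set.toFinite _)
        have h2 := Set.ncard_diff_singleton_lt_of_mem hmem (Set.toFinite _)
        omega
      obtain ⟨Y, hYcol, hY⟩ := ih X' hX'c hX'b hX'nc hcard'
      exact ⟨Y, Relation.ReflTransGen.head hstep hYcol, hY⟩
    · refine ⟨X, Relation.ReflTransGen.refl, fun σ hσ => ?_⟩
      have h1 := hXb σ hσ
      have h2 : σ.card ≠ d + 1 := fun h => hS ⟨σ, hσ, h⟩
      omega

/-- A `d`-dimensional complex is `d`-collapsible (collapses to a complex of dimension
less than `d`) if and only if it contains no `d`-dimensional core. -/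
theorem stmt_5 {V : Type*} [Fintype V] [DecidableEq V] (d : ℕ) (hd : 1 ≤ d)
    (X : Set (Finset V)) (hX : IsComplex X) (hdim : Dim X d) :
    (∃ Y, CollapsesTo X Y ∧ ∀ σ ∈ Y, σ.card ≤ d) ↔
      ¬ ∃ L, L ⊆ X ∧ IsComplex L ∧ IsCore L d := by
  constructor
  · rintro ⟨Y, hcol, hY⟩ ⟨L, hLX, hLc, hcore⟩
    obtain ⟨L', hL'L, hL'c, ⟨σ₀, hσ₀, hσ₀c⟩, htwo⟩ := exists_good_core hLc hcore
    have hL'Y : L' ⊆ Y := core_preserved hdim.2 hL'c htwo hcol (hL'L.trans hLX)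
    have := hY σ₀ (hL'Y hσ₀)
    omega
  · intro hnc
    exact collapse_of_no_core d hd (({σ ∈ X | σ.card = d + 1}).ncard) X hX hdim.2 hnc le_rfl
end

section
/- Let X be a simplicial complex on ground set V, let τ be a free face of X with σ the unique face of X properly containing τ, and let X′ = X ∖ {τ, σ}. Then the Alexander dual (X′)* equals X* ∪ {V ∖ σ, V ∖ τ}, and this is an elementary anticollapse of X*: |V ∖ τ| = |V ∖ σ| + 1, V ∖ σ ∉ X*, and every subset of V ∖ τ of cardinality |V ∖ τ| − 1 other than V ∖ σ already belongs to X*. -/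
/-- The Alexander dual of a complex `X` on the (finite) ground set `V`:
all subsets `σ` of `V` whose complement is not a face of `X`. -/
def AlexanderDual {V : Type*} [Fintype V] [DecidableEq V] (X : Set (Finset V)) :
    Set (Finset V) :=
  {σ : Finset V | σᶜ ∉ X}

/-- Removing a free pair `(τ, σ)` from `X` corresponds, on Alexander duals, to the
elementary anticollapse adding the pair `(σᶜ, τᶜ)`: the dual of `X \ {τ, σ}` is
`X* ∪ {σᶜ, τᶜ}`, where `|τᶜ| = |σᶜ| + 1`, `σᶜ ∉ X*`, and every subset of `τᶜ` of
cardinality `|τᶜ| - 1` other than `σᶜ` already belongs to `X*`. -/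
theorem stmt_6 {V : Type*} [Fintype V] [DecidableEq V] (X : Set (Finset V))
    (hX : IsComplex X) (τ σ : Finset V) (hfree : IsFreeFace X τ σ) :
    AlexanderDual (X \ {τ, σ}) = AlexanderDual X ∪ {σᶜ, τᶜ} ∧
    τᶜ.card = σᶜ.card + 1 ∧
    σᶜ ∉ AlexanderDual X ∧
    (∀ ρ ⊆ τᶜ, ρ.card + 1 = τᶜ.card → ρ ≠ σᶜ → ρ ∈ AlexanderDual X) := by
  obtain ⟨hτX, hτne, hσX, hτσ, huniq⟩ := hfree
  have hcard : σ.card = τ.card + 1 := by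
    obtain ⟨x, hxσ, hxτ⟩ := Finset.exists_of_ssubset hτσ
    have hins : insert x τ ⊆ σ := Finset.insert_subset hxσ hτσ.subset
    have hmem : insert x τ ∈ X := hX σ hσX _ hins
    have : insert x τ = σ := huniq _ hmem (Finset.ssubset_insert hxτ)
    rw [← this, Finset.card_insert_of_notMem hxτ]
  have hτle : τ.card ≤ Fintype.card V := Finset.card_le_univ τ
  have hσle : σ.card ≤ Fintype.card V := Finset.card_le_univ σ
  refine ⟨?_, ?_, ?_, ?_⟩
  · ext ρ
    simp only [AlexanderDual, Set.mem_setOf_eq, Set.mem_diff, Set.mem_union,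
      Set.mem_insert_iff, Set.mem_singleton_iff, not_and, not_not]
    constructor
    · intro h
      by_cases hρ : ρᶜ ∈ X
      · rcases h hρ with h1 | h1
        · right; right; rw [← h1, compl_compl]
        · right; left; rw [← h1, compl_compl]
      · exact Or.inl hρ
    · rintro (h | h | h) hρ
      · exact absurd hρ h
      · right; rw [h, compl_compl]
      · left; rw [h, compl_compl]
  · rw [Finset.card_compl, Finset.card_compl, hcard]
    omega
  · simp only [AlexanderDual, Set.mem_setOf_eq, compl_compl, not_not]
    exact hσX
  · intro ρ hρτ hρcard hρσ
    simp only [AlexanderDual, Set.mem_setOf_eq]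
    intro hρX
    have hτρ : τ ⊆ ρᶜ := by
      intro x hx
      simp only [Finset.mem_compl]
      intro hxρ
      have := hρτ hxρ
      simp [Finset.mem_compl, hx] at this
    have hρccard : (ρᶜ).card = τ.card + 1 := by
      rw [Finset.card_compl]
      rw [Finset.card_compl] at hρcard
      omega
    have hss : τ ⊂ ρᶜ := lt_of_le_of_ne hτρ (by
      intro h; rw [← h] at hρccard; omega)
    have := huniq _ hρX hss
    apply hρσ
    rw [← compl_compl ρ, this]
end

section
/- Let X and Y be simplicial complexes on the same ground set V. If X collapses to Y, then the Alexander dual X* anticollapses to the Alexander dual Y*. -/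
/-- An elementary anticollapse: add a pair `τ ⊂ σ` with `|σ| = |τ| + 1`, where `τ ∉ X`
and every subset of `σ` of cardinality `|σ| - 1` other than `τ` is already a face of `X`. -/
def AnticollapseStep {V : Type*} [DecidableEq V] (X Y : Set (Finset V)) : Prop :=
  ∃ τ σ : Finset V, τ ⊂ σ ∧ σ.card = τ.card + 1 ∧ τ ∉ X ∧
    (∀ ρ ⊆ σ, ρ.card + 1 = σ.card → ρ ≠ τ → ρ ∈ X) ∧
    Y = X ∪ {τ, σ}

/-- `X` anticollapses to `Y` via a finite sequence of elementary anticollapses. -/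
def AnticollapsesTo {V : Type*} [DecidableEq V] (X Y : Set (Finset V)) : Prop :=
  Relation.ReflTransGen AnticollapseStep X Y

lemma free_face_card {V : Type*} [DecidableEq V] {X : Set (Finset V)} (hX : IsComplex X)
    {τ σ : Finset V} (hf : IsFreeFace X τ σ) : σ.card = τ.card + 1 := by
  obtain ⟨hτ, -, hσ, hss, huniq⟩ := hf
  obtain ⟨a, haσ, haτ⟩ := Finset.exists_of_ssubset hss
  have hins : insert a τ ⊆ σ := Finset.insert_subset haσ hss.subset
  have hρX : insert a τ ∈ X := hX σ hσ _ hins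
  have hρss : τ ⊂ insert a τ := Finset.ssubset_insert haτ
  have := huniq _ hρX hρss
  rw [← this, Finset.card_insert_of_notMem haτ]

lemma collapse_step_aux {V : Type*} [Fintype V] [DecidableEq V] {X Y : Set (Finset V)}
    (hX : IsComplex X) (h : CollapseStep X Y) :
    IsComplex Y ∧ AnticollapseStep (AlexanderDual X) (AlexanderDual Y) := by
  obtain ⟨τ, σ, hf, rfl⟩ := h
  obtain ⟨hτ, hne, hσ, hss, huniq⟩ := hf
  have hcard := free_face_card hX ⟨hτ, hne, hσ, hss, huniq⟩
  constructor
  · intro ρ hρ μ hμ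
    obtain ⟨hρX, hρn⟩ := hρ
    simp only [Set.mem_insert_iff, Set.mem_singleton_iff, not_or] at hρn
    refine ⟨hX ρ hρX μ hμ, ?_⟩
    simp only [Set.mem_insert_iff, Set.mem_singleton_iff, not_or]
    constructor
    · intro he
      have hτρ : τ ⊂ ρ := lt_of_le_of_ne (he ▸ hμ) (fun e => hρn.1 e.symm)
      exact hρn.2 (huniq ρ hρX hτρ)
    · intro he
      exact hρn.2 (huniq ρ hρX (lt_of_lt_of_le hss (he ▸ hμ)))
  · refine ⟨σᶜ, τᶜ, ?_, ?_, ?_, ?_, ?_⟩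
    · exact compl_lt_compl_iff_lt.mpr hss
    · have h1 : σ.card ≤ Fintype.card V := Finset.card_le_univ σ
      rw [Finset.card_compl, Finset.card_compl]
      omega
    · simp only [AlexanderDual, Set.mem_setOf_eq, compl_compl, not_not]
      exact hσ
    · intro ρ hρsub hρcard hρne
      simp only [AlexanderDual, Set.mem_setOf_eq]
      intro hρX
      have hτρ : τ ⊆ ρᶜ := by
        have := compl_le_compl_iff_le.mpr hρsub
        simpa using this
      have hcards : (ρᶜ).card = τ.card + 1 := by
        have h1 : τ.card ≤ Fintype.card V := Finset.card_le_univ τ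
        have h2 : ρ.card ≤ Fintype.card V := Finset.card_le_univ ρ
        rw [Finset.card_compl]
        rw [Finset.card_compl] at hρcard
        omega
      have hssρ : τ ⊂ ρᶜ := by
        refine lt_of_le_of_ne hτρ ?_
        intro e; rw [← e] at hcards; omega
      have := huniq _ hρX hssρ
      apply hρne
      rw [← this, compl_compl]
    · ext ρ
      simp only [AlexanderDual, Set.mem_setOf_eq, Set.mem_diff, Set.mem_union,
        Set.mem_insert_iff, Set.mem_singleton_iff]
      have e1 : ρ = τᶜ ↔ ρᶜ = τ := by
        constructor <;> intro e
        · rw [e, compl_compl]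
        · rw [← e, compl_compl]
      have e2 : ρ = σᶜ ↔ ρᶜ = σ := by
        constructor <;> intro e
        · rw [e, compl_compl]
        · rw [← e, compl_compl]
      rw [e1, e2]
      tauto

/-- If a simplicial complex `X` collapses to `Y`, then the Alexander dual of `X`
anticollapses to the Alexander dual of `Y`. -/
theorem stmt_7 {V : Type*} [Fintype V] [DecidableEq V] (X Y : Set (Finset V))
    (hX : IsComplex X) (h : CollapsesTo X Y) :
    AnticollapsesTo (AlexanderDual X) (AlexanderDual Y) := by
  suffices h' : IsComplex Y ∧ AnticollapsesTo (AlexanderDual X) (AlexanderDual Y) from h'.2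
  induction h with
  | refl => exact ⟨hX, Relation.ReflTransGen.refl⟩
  | tail hab hbc ih =>
    obtain ⟨hb, hanti⟩ := ih
    obtain ⟨hc, hstep⟩ := collapse_step_aux hb hbc
    exact ⟨hc, hanti.tail hstep⟩
end

section
/- Let X be a simplicial complex on n vertices with ground set V. If X is collapsible (collapses to a complex consisting of a single vertex), then its Alexander dual X* is anticollapsible, i.e. X* anticollapses to the simplex Δ_{n−1} of all subsets of V. -/
lemma freeface_card {V : Type*} [DecidableEq V] {X : Set (Finset V)} {τ σ : Finset V}
    (hX : IsComplex X) (hf : IsFreeFace X τ σ) : σ.card = τ.card + 1 := by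
  obtain ⟨hτ, -, hσ, hss, huniq⟩ := hf
  obtain ⟨x, hxσ, hxτ⟩ := Finset.exists_of_ssubset hss
  have hρσ : insert x τ ⊆ σ := Finset.insert_subset hxσ hss.subset
  have hρX : insert x τ ∈ X := hX σ hσ _ hρσ
  have : insert x τ = σ := huniq _ hρX (Finset.ssubset_insert hxτ)
  rw [← this, Finset.card_insert_of_notMem hxτ]

lemma step_complex {V : Type*} [DecidableEq V] {X Y : Set (Finset V)}
    (hX : IsComplex X) (hs : CollapseStep X Y) : IsComplex Y := by
  obtain ⟨τ, σ, ⟨hτ, -, hσ, hss, huniq⟩, rfl⟩ := hs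
  intro ρ hρ μ hμρ
  obtain ⟨hρX, hρn⟩ := hρ
  refine ⟨hX ρ hρX μ hμρ, ?_⟩
  rintro (rfl | rfl)
  · exact hρn (Or.inr (huniq ρ hρX (Finset.ssubset_iff_subset_ne.mpr
      ⟨hμρ, fun h => hρn (Or.inl h.symm)⟩)))
  · exact hρn (Or.inr (huniq ρ hρX (lt_of_lt_of_le hss hμρ)))

lemma step_dual {V : Type*} [Fintype V] [DecidableEq V] {X Y : Set (Finset V)}
    (hX : IsComplex X) (hs : CollapseStep X Y) :
    AnticollapseStep (AlexanderDual X) (AlexanderDual Y) := by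
  obtain ⟨τ, σ, hf, rfl⟩ := hs
  have hcard := freeface_card hX hf
  obtain ⟨hτ, -, hσ, hss, huniq⟩ := hf
  have hσn : σ.card ≤ Fintype.card V := Finset.card_le_univ σ
  refine ⟨σᶜ, τᶜ, ?_, ?_, ?_, ?_, ?_⟩
  · rw [Finset.compl_ssubset_compl]; exact hss
  · rw [Finset.card_compl, Finset.card_compl]; omega
  · simpa [AlexanderDual] using hσ
  · intro ρ hρτ hcρ hρσ
    simp only [AlexanderDual, Set.mem_setOf_eq]
    intro hρX
    have hτρ : τ ⊆ ρᶜ := by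
      rw [← compl_compl τ]; exact Finset.compl_subset_compl.mpr hρτ
    have hcρ' : ρᶜ.card = τ.card + 1 := by
      rw [Finset.card_compl]
      rw [Finset.card_compl] at hcρ
      have := Finset.card_le_univ τ
      have := Finset.card_le_card hρτ
      rw [Finset.card_compl] at this
      omega
    have : ρᶜ = σ := huniq _ hρX (Finset.ssubset_iff_subset_ne.mpr ⟨hτρ, by
      intro h; rw [← h] at hcρ'; omega⟩)
    exact hρσ (by rw [← this, compl_compl])
  · ext ρ
    have e1 : ρ = τᶜ ↔ ρᶜ = τ := by
      constructor <;> intro h <;> subst h <;> simp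
    have e2 : ρ = σᶜ ↔ ρᶜ = σ := by
      constructor <;> intro h <;> subst h <;> simp
    by_cases h1 : ρᶜ ∈ X <;> by_cases h2 : ρᶜ = τ <;> by_cases h3 : ρᶜ = σ <;>
      simp [AlexanderDual, Set.mem_diff, e1, e2, h1, h2, h3]

/-- If a simplicial complex `X` on `n` vertices is collapsible (collapses to a single
vertex), then its Alexander dual anticollapses to the full simplex on the `n` vertices. -/
theorem stmt_8 {V : Type*} [Fintype V] [DecidableEq V] (n : ℕ)
    (hcard : Fintype.card V = n) (X : Set (Finset V)) (hX : IsComplex X)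
    (hvert : ∀ v : V, ({v} : Finset V) ∈ X)
    (h : ∃ v : V, CollapsesTo X {∅, ({v} : Finset V)}) :
    AnticollapsesTo (AlexanderDual X) (Set.univ : Set (Finset V)) := by
  obtain ⟨v, hc⟩ := h
  have key : ∀ Z : Set (Finset V), CollapsesTo X Z →
      IsComplex Z ∧ AnticollapsesTo (AlexanderDual X) (AlexanderDual Z) := by
    intro Z hc
    induction hc with
    | refl => exact ⟨hX, Relation.ReflTransGen.refl⟩
    | tail hab hbc ih => exact ⟨step_complex ih.1 hbc, ih.2.tail (step_dual ih.1 hbc)⟩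
  obtain ⟨-, hanti⟩ := key _ hc
  refine hanti.tail ?_
  have hn : 1 ≤ Fintype.card V := Fintype.card_pos_iff.mpr ⟨v⟩
  refine ⟨({v} : Finset V)ᶜ, Finset.univ, ?_, ?_, ?_, ?_, ?_⟩
  · rw [Finset.ssubset_univ_iff]
    intro h
    have : v ∈ ({v} : Finset V)ᶜ := h ▸ Finset.mem_univ v
    simp at this
  · rw [Finset.card_compl, Finset.card_univ, Finset.card_singleton]; omega
  · simp [AlexanderDual]
  · intro ρ hρu hρc hρne
    have hcc : ρᶜ.card = 1 := by
      rw [Finset.card_compl]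
      rw [Finset.card_univ] at hρc
      omega
    simp only [AlexanderDual, Set.mem_setOf_eq, Set.mem_insert_iff, Set.mem_singleton_iff]
    rintro (h0 | h1)
    · rw [h0] at hcc; simp at hcc
    · exact hρne (by rw [← h1, compl_compl])
  · ext ρ
    simp only [Set.mem_univ, true_iff, Set.mem_union, AlexanderDual, Set.mem_setOf_eq,
      Set.mem_insert_iff, Set.mem_singleton_iff]
    by_cases h0 : ρᶜ = ∅
    · right; right
      rw [← compl_compl ρ, h0]; simp
    · by_cases h1 : ρᶜ = {v}
      · right; left; rw [← compl_compl ρ, h1]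
      · left; simp [h0, h1]
end

section
/- Let n ≥ 4 and let X be a simplicial complex on a ground set V with |V| = n and dim X = n − 3. Suppose the graph whose vertex set is V and whose edges are the 2-element faces of the Alexander dual X* is connected. Then X has a free face of dimension n − 4. -/
/-- The graph on the vertex set `V` whose edges are the 2-element faces of the
Alexander dual of `X`. -/
def dualGraph {V : Type*} [Fintype V] [DecidableEq V] (X : Set (Finset V)) :
    SimpleGraph V where
  Adj u v := u ≠ v ∧ ({u, v} : Finset V) ∈ AlexanderDual X
  symm := by
    constructor
    intro u v h
    exact ⟨h.1.symm, by rw [Finset.pair_comm]; exact h.2⟩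
  loopless := by
    constructor
    intro v h
    exact h.1 rfl

lemma exists_path3 {V : Type*} (D : SimpleGraph V) (hconn : D.Connected)
    {a b : V} (hab : a ≠ b) (hnadj : ¬ D.Adj a b) :
    ∃ x y z, D.Adj x y ∧ D.Adj y z ∧ ¬ D.Adj x z ∧ x ≠ z := by
  obtain ⟨p, hp⟩ := (hconn a b).exists_walk_length_eq_dist
  cases p with
  | nil => exact absurd rfl hab
  | @cons _ c _ h1 q =>
    cases q with
    | nil => exact absurd h1 hnadj
    | @cons _ d _ h2 r =>
      simp only [SimpleGraph.Walk.length_cons] at hp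
      refine ⟨a, c, d, h1, h2, ?_, ?_⟩
      · intro hadj
        have := SimpleGraph.dist_le (SimpleGraph.Walk.cons hadj r)
        simp only [SimpleGraph.Walk.length_cons] at this
        omega
      · intro heq
        subst heq
        have := SimpleGraph.dist_le r
        omega

/-- Let `n ≥ 4` and let `X` be a complex on `n` vertices of dimension `n - 3`. If the
graph of edges of the Alexander dual `X*` is connected, then `X` has a free face of
dimension `n - 4` (i.e. with `n - 3` vertices). -/
theorem stmt_9 {V : Type*} [Fintype V] [DecidableEq V] (n : ℕ) (hn : 4 ≤ n)
    (hcard : Fintype.card V = n) (X : Set (Finset V)) (hX : IsComplex X)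
    (hdim : Dim X (n - 3)) (hconn : (dualGraph X).Connected) :
    ∃ τ σ, IsFreeFace X τ σ ∧ τ.card = n - 3 := by
  obtain ⟨⟨σ0, hσ0X, hσ0card⟩, hub⟩ := hdim
  have hc : σ0ᶜ.card = 2 := by
    rw [Finset.card_compl, hcard, hσ0card]; omega
  obtain ⟨a, b, hab, habeq⟩ := Finset.card_eq_two.mp hc
  have hnadj : ¬ (dualGraph X).Adj a b := by
    intro h
    apply h.2
    show ({a, b} : Finset V)ᶜ ∈ X
    rw [← habeq, compl_compl]
    exact hσ0X
  obtain ⟨x, y, z, hxy, hyz, hxz, hxzne⟩ := exists_path3 _ hconn hab hnadj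
  have hxyne : x ≠ y := hxy.1
  have hyzne : y ≠ z := hyz.1
  have hσX : ({x, z} : Finset V)ᶜ ∈ X := by
    by_contra h
    exact hxz ⟨hxzne, h⟩
  have hTcard : ({x, y, z} : Finset V).card = 3 := by
    rw [Finset.card_insert_of_notMem (by simp [hxyne, hxzne]),
        Finset.card_insert_of_notMem (by simp [hyzne]), Finset.card_singleton]
  have hτcard : ({x, y, z} : Finset V)ᶜ.card = n - 3 := by
    rw [Finset.card_compl, hcard, hTcard]
  have hσcard : ({x, z} : Finset V)ᶜ.card = n - 2 := by
    rw [Finset.card_compl, hcard, Finset.card_insert_of_notMem (by simp [hxzne]),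
        Finset.card_singleton]
  have hsub : ({x, y, z} : Finset V)ᶜ ⊆ ({x, z} : Finset V)ᶜ := by
    apply Finset.compl_subset_compl.mpr
    intro w hw
    simp only [Finset.mem_insert, Finset.mem_singleton] at hw ⊢
    tauto
  refine ⟨({x, y, z} : Finset V)ᶜ, ({x, z} : Finset V)ᶜ,
    ⟨hX _ hσX _ hsub, ?_, hσX, ⟨hsub, ?_⟩, ?_⟩, hτcard⟩
  · rw [← Finset.card_pos, hτcard]; omega
  · intro h
    have := Finset.card_le_card h
    rw [hτcard, hσcard] at this
    omega
  · intro ρ hρ hss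
    have hρub : ρ.card ≤ n - 3 + 1 := hub ρ hρ
    have hρlb : ({x, y, z} : Finset V)ᶜ.card < ρ.card := Finset.card_lt_card hss
    rw [hτcard] at hρlb
    have hρc : ρᶜ.card = 2 := by
      rw [Finset.card_compl, hcard]; omega
    obtain ⟨u, v, huv, huveq⟩ := Finset.card_eq_two.mp hρc
    have hρcsub : ρᶜ ⊆ ({x, y, z} : Finset V) := by
      have := Finset.compl_subset_compl.mpr hss.subset
      rwa [compl_compl] at this
    have hu : u ∈ ({x, y, z} : Finset V) := hρcsub (by rw [huveq]; simp)
    have hv : v ∈ ({x, y, z} : Finset V) := hρcsub (by rw [huveq]; simp)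
    have hρeq : ρ = ({u, v} : Finset V)ᶜ := by rw [← huveq, compl_compl]
    have hρX : ({u, v} : Finset V)ᶜ ∈ X := hρeq ▸ hρ
    have hxync : ¬ (({x, y} : Finset V)ᶜ ∈ X) := hxy.2
    have hyznc : ¬ (({y, z} : Finset V)ᶜ ∈ X) := hyz.2
    simp only [Finset.mem_insert, Finset.mem_singleton] at hu hv
    rw [hρeq]
    rcases hu with rfl | rfl | rfl <;> rcases hv with rfl | rfl | rfl
    · exact absurd rfl huv
    · exact absurd hρX hxync
    · rfl
    · rw [Finset.pair_comm] at hρX; exact absurd hρX hxync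
    · exact absurd rfl huv
    · exact absurd hρX hyznc
    · rw [Finset.pair_comm]
    · rw [Finset.pair_comm] at hρX; exact absurd hρX hyznc
    · exact absurd rfl huv
end

section
/- Let n ≥ 2 and let X be an anticollapsible simplicial complex on n vertices with dim X ≥ n − 3. Then X has at least one free face. -/
section AuxStmt10
set_option linter.unusedSectionVars false
variable {V : Type*} [Fintype V] [DecidableEq V]

lemma compl_eq_aux_stmt10 {ρ s : Finset V} (h : Finset.univ \ s ⊆ ρ) :
    ρ = Finset.univ \ (s \ ρ) := by
  ext y
  simp only [Finset.mem_sdiff, Finset.mem_univ, true_and, not_and, not_not]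
  constructor
  · exact fun hy _ => hy
  · intro hy
    by_cases hys : y ∈ s
    · exact hy hys
    · exact h (Finset.mem_sdiff.mpr ⟨Finset.mem_univ y, hys⟩)

lemma rtg_symm_stmt10 {α : Type*} {r : α → α → Prop} (hs : Symmetric r) {a b : α}
    (h : Relation.ReflTransGen r a b) : Relation.ReflTransGen r b a := by
  induction h with
  | refl => exact Relation.ReflTransGen.refl
  | tail _ h2 ih => exact Relation.ReflTransGen.head (hs h2) ih

lemma erase_inj_univ_stmt10 {a b : V}
    (h : Finset.univ.erase a = Finset.univ.erase b) : a = b := by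
  by_contra hab
  have : a ∈ Finset.univ.erase b := Finset.mem_erase.mpr ⟨hab, Finset.mem_univ a⟩
  rw [← h] at this
  exact (Finset.notMem_erase a Finset.univ) this

/-- every subset of σ is in X ∪ {τ, σ} -/
lemma subs_in_stmt10 {X : Set (Finset V)} {τ σ : Finset V} (hXc : IsComplex X)
    (hts : τ ⊂ σ)
    (hfacets : ∀ ρ ⊆ σ, ρ.card + 1 = σ.card → ρ ≠ τ → ρ ∈ X) :
    ∀ ρ' ⊆ σ, ρ' ∈ X ∪ {τ, σ} := by
  intro ρ' hρ'
  by_cases h1 : ρ' = σ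
  · exact Or.inr (Or.inr h1)
  by_cases h2 : ρ' = τ
  · exact Or.inr (Or.inl h2)
  left
  have hss : ρ' ⊂ σ := ⟨hρ', fun h => h1 (Finset.Subset.antisymm hρ' h)⟩
  by_cases hτ' : ρ' ⊆ τ
  · have hpt : ρ' ⊂ τ := ⟨hτ', fun h => h2 (Finset.Subset.antisymm hτ' h)⟩
    obtain ⟨x, hxτ, hxρ'⟩ := Finset.exists_of_ssubset hpt
    have hxσ : x ∈ σ := hts.subset hxτ
    have hfx : σ.erase x ≠ τ := fun h => (h ▸ Finset.notMem_erase x σ) hxτ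
    have hmem : σ.erase x ∈ X :=
      hfacets _ (Finset.erase_subset _ _) (Finset.card_erase_add_one hxσ) hfx
    exact hXc _ hmem ρ' (Finset.subset_erase.mpr ⟨hρ', hxρ'⟩)
  · obtain ⟨y, hyρ', hyτ⟩ := Finset.not_subset.mp hτ'
    obtain ⟨x, hxσ, hxρ'⟩ := Finset.exists_of_ssubset hss
    have hfx : σ.erase x ≠ τ := by
      intro h
      exact hyτ (h ▸ Finset.mem_erase.mpr ⟨fun hyx => hxρ' (hyx ▸ hyρ'), hρ' hyρ'⟩)
    have hmem : σ.erase x ∈ X :=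
      hfacets _ (Finset.erase_subset _ _) (Finset.card_erase_add_one hxσ) hfx
    exact hXc _ hmem ρ' (Finset.subset_erase.mpr ⟨hρ', hxρ'⟩)

lemma step_complex_stmt10 {X Y : Set (Finset V)} (hstep : AnticollapseStep X Y)
    (hXc : IsComplex X) : IsComplex Y := by
  obtain ⟨τ, σ, hts, hcard, hτX, hfacets, rfl⟩ := hstep
  intro ρ hρ ρ' hsub
  rcases hρ with hρ | hρ | hρ
  · exact Or.inl (hXc _ hρ _ hsub)
  · exact subs_in_stmt10 hXc hts hfacets ρ' (hsub.trans (hρ ▸ hts.subset))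
  · exact subs_in_stmt10 hXc hts hfacets ρ' (hρ ▸ hsub)

/-- dual adjacency relation -/
def Erel (X : Set (Finset V)) (u v : V) : Prop :=
  u ≠ v ∧ (Finset.univ \ {u, v} : Finset V) ∉ X

/-- connectivity invariant -/
def Pinv (X : Set (Finset V)) : Prop :=
  ∀ a b : V, Finset.univ.erase a ∉ X → Finset.univ.erase b ∉ X →
    Relation.ReflTransGen (Erel X) a b

lemma step_P_stmt10 (hn : 2 ≤ Fintype.card V) {X Y : Set (Finset V)}
    (hstep : AnticollapseStep X Y) (hXc : IsComplex X) (hP : Pinv Y) : Pinv X := by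
  obtain ⟨τ, σ, hts, hcard, hτX, hfacets, rfl⟩ := hstep
  by_cases hσ : σ = (Finset.univ : Finset V)
  · subst hσ
    have key : ∀ c : V, Finset.univ.erase c ∉ X → Finset.univ.erase c = τ := by
      intro c hc
      by_contra hne
      exact hc (hfacets _ (Finset.erase_subset _ _)
        (Finset.card_erase_add_one (Finset.mem_univ c)) hne)
    intro a b ha hb
    have : a = b := erase_inj_univ_stmt10 ((key a ha).trans (key b hb).symm)
    subst this
    exact Relation.ReflTransGen.refl
  · have hσss : σ ⊂ Finset.univ := Finset.ssubset_univ_iff.mpr hσ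
    have hσcard : σ.card < Fintype.card V := by
      have := Finset.card_lt_card hσss
      simpa using this
    have norm : ∀ c : V, Finset.univ.erase c ∉ X →
        ∃ x, Finset.univ.erase x ∉ X ∪ {τ, σ} ∧ Relation.ReflTransGen (Erel X) c x := by
      intro c hc
      by_cases hcY : Finset.univ.erase c ∈ X ∪ {τ, σ}
      · have hcσ : Finset.univ.erase c = σ := by
          rcases hcY with h | h | h
          · exact absurd h hc
          · exfalso
            have h1 : (Finset.univ.erase c).card + 1 = Fintype.card V := by
              rw [Finset.card_erase_add_one (Finset.mem_univ c), Finset.card_univ]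
            rw [h] at h1
            omega
          · exact h
        have hστ : (σ \ τ).card = 1 := by
          rw [Finset.card_sdiff_of_subset hts.subset]; omega
        obtain ⟨x, hx⟩ := Finset.card_eq_one.mp hστ
        have hxmem : x ∈ σ ∧ x ∉ τ := by
          have : x ∈ σ \ τ := hx ▸ Finset.mem_singleton_self x
          exact Finset.mem_sdiff.mp this
        have hxc : x ≠ c := by
          intro h
          have := hxmem.1
          rw [← hcσ, h] at this
          exact (Finset.notMem_erase c Finset.univ) this
        have hcm : σ.card = Fintype.card V - 1 := by
          rw [← hcσ, Finset.card_erase_of_mem (Finset.mem_univ c), Finset.card_univ]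
        have hτ_eq : τ = Finset.univ \ {c, x} := by
          apply Finset.eq_of_subset_of_card_le
          · intro y hy
            have hyσ : y ∈ σ := hts.subset hy
            have hyc : y ≠ c := by
              rw [← hcσ] at hyσ
              exact (Finset.mem_erase.mp hyσ).1
            have hyx : y ≠ x := fun h => hxmem.2 (h ▸ hy)
            simp [Finset.mem_sdiff, hyc, hyx]
          · rw [Finset.card_sdiff_of_subset (Finset.subset_univ _), Finset.card_pair hxc.symm,
              Finset.card_univ]
            omega
        have hEcx : Erel X c x := ⟨fun h => hxc h.symm, by rw [← hτ_eq]; exact hτX⟩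
        have hτsub : τ ⊆ Finset.univ.erase x := by
          rw [hτ_eq, Finset.erase_eq]
          exact Finset.sdiff_subset_sdiff (Finset.Subset.refl _) (by simp)
        have hxX : Finset.univ.erase x ∉ X := fun h => hτX (hXc _ h τ hτsub)
        have hxY : Finset.univ.erase x ∉ X ∪ {τ, σ} := by
          intro h
          rcases h with h | h | h
          · exact hxX h
          · have h1 : (Finset.univ.erase x).card + 1 = Fintype.card V := by
              rw [Finset.card_erase_add_one (Finset.mem_univ x), Finset.card_univ]
            rw [h] at h1
            omega
          · exact hxc (erase_inj_univ_stmt10 (h.trans hcσ.symm))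
        exact ⟨x, hxY, Relation.ReflTransGen.single hEcx⟩
      · exact ⟨c, hcY, Relation.ReflTransGen.refl⟩
    intro a b ha hb
    obtain ⟨xa, hxaY, hpa⟩ := norm a ha
    obtain ⟨xb, hxbY, hpb⟩ := norm b hb
    have hmid : Relation.ReflTransGen (Erel (X ∪ {τ, σ})) xa xb := hP xa xb hxaY hxbY
    have hmid' : Relation.ReflTransGen (Erel X) xa xb :=
      Relation.ReflTransGen.mono (fun u v h => ⟨h.1, fun hm => h.2 (Or.inl hm)⟩) _ _ hmid
    have hsymm : Symmetric (Erel X) := by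
      intro u v h
      exact ⟨h.1.symm, by rw [Finset.pair_comm]; exact h.2⟩
    exact hpa.trans (hmid'.trans (rtg_symm_stmt10 hsymm hpb))

lemma anti_P_stmt10 (hn : 2 ≤ Fintype.card V) {X : Set (Finset V)} (hXc : IsComplex X)
    (h : Relation.ReflTransGen AnticollapseStep X (Set.univ : Set (Finset V))) :
    Pinv X := by
  refine Relation.ReflTransGen.head_induction_on
    (motive := fun Z (_ : Relation.ReflTransGen AnticollapseStep Z (Set.univ : Set (Finset V))) =>
      IsComplex Z → Pinv Z) h ?_ ?_ hXc
  · intro _ a b ha _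
    exact absurd (Set.mem_univ _) ha
  · intro Z W hstep htail ih hZc
    exact step_P_stmt10 hn hstep hZc (ih (step_complex_stmt10 hstep hZc))

lemma freeC_stmt10 {X : Set (Finset V)} (hXc : IsComplex X)
    (hV : (Finset.univ : Finset V) ∉ X)
    (hC : ∀ v : V, Finset.univ.erase v ∉ X)
    (h0 : ∀ s : Finset V, s ∉ X → 2 ≤ s.card) {a b c : V}
    (hab : a ≠ b) (hac : a ≠ c) (hbc : b ≠ c)
    (h1 : (Finset.univ \ {a, c} : Finset V) ∉ X)
    (h2 : (Finset.univ \ {c, b} : Finset V) ∉ X)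
    (h3 : (Finset.univ \ {a, b} : Finset V) ∈ X) :
    HasFreeFace X := by
  have hn4 : 4 ≤ Fintype.card V := by
    have := h0 _ h1
    rw [Finset.card_sdiff_of_subset (Finset.subset_univ _), Finset.card_pair hac, Finset.card_univ] at this
    omega
  have htriple : ({a, b, c} : Finset V).card = 3 := by
    rw [Finset.card_insert_of_notMem (by simp [hab, hac]),
      Finset.card_insert_of_notMem (by simp [hbc]), Finset.card_singleton]
  have hpairsub : ({a, b} : Finset V) ⊆ {a, b, c} := by
    intro y hy; simp at hy ⊢; tauto
  have hsubττ : (Finset.univ \ {a, b, c} : Finset V) ⊆ Finset.univ \ {a, b} :=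
    Finset.sdiff_subset_sdiff (Finset.Subset.refl _) hpairsub
  refine ⟨Finset.univ \ {a, b, c}, Finset.univ \ {a, b}, ?_, ?_, h3, ?_, ?_⟩
  · exact hXc _ h3 _ hsubττ
  · rw [← Finset.card_pos, Finset.card_sdiff_of_subset (Finset.subset_univ _), htriple, Finset.card_univ]
    omega
  · refine ⟨hsubττ, fun hcon => ?_⟩
    have hcσ : c ∈ Finset.univ \ ({a, b} : Finset V) := by
      simp [Ne.symm hac, Ne.symm hbc]
    have := hcon hcσ
    simp at this
  · intro ρ hρ hss
    have hρc := compl_eq_aux_stmt10 (s := ({a, b, c} : Finset V)) hss.subset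
    set t : Finset V := ({a, b, c} : Finset V) \ ρ with ht
    have htsub : t ⊆ ({a, b, c} : Finset V) := Finset.sdiff_subset
    have htne : t ≠ ∅ := by
      intro h
      rw [h, Finset.sdiff_empty] at hρc
      exact hV (hρc ▸ hρ)
    have htsing : ∀ v : V, t ≠ {v} := by
      intro v h
      rw [h, ← Finset.erase_eq] at hρc
      exact hC v (hρc ▸ hρ)
    have ht2 : 2 ≤ t.card := by
      by_contra hlt
      push_neg at hlt
      interval_cases h : t.card
      · exact htne (Finset.card_eq_zero.mp h)
      · obtain ⟨v, hv⟩ := Finset.card_eq_one.mp h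
        exact htsing v hv
    have htne3 : t ≠ ({a, b, c} : Finset V) := by
      intro h
      rw [h] at hρc
      exact hss.ne (hρc.symm)
    have ht3 : t.card < 3 := by
      have := Finset.card_lt_card ⟨htsub, fun hcon => htne3 (Finset.Subset.antisymm htsub hcon)⟩
      omega
    obtain ⟨x, y, hxy, hteq⟩ := Finset.card_eq_two.mp (by omega : t.card = 2)
    have hx : x ∈ ({a, b, c} : Finset V) := htsub (hteq ▸ by simp)
    have hy : y ∈ ({a, b, c} : Finset V) := htsub (hteq ▸ by simp)
    rw [hteq] at hρc
    simp only [Finset.mem_insert, Finset.mem_singleton] at hx hy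
    rcases hx with rfl | rfl | rfl <;> rcases hy with rfl | rfl | rfl
    · exact absurd rfl hxy
    · exact hρc
    · exact absurd (hρc ▸ hρ) h1
    · rw [Finset.pair_comm] at hρc; exact hρc
    · exact absurd rfl hxy
    · exact absurd (hρc ▸ hρ) (by rw [Finset.pair_comm] at h2; exact h2)
    · rw [Finset.pair_comm] at hρc; exact absurd (hρc ▸ hρ) h1
    · exact absurd (hρc ▸ hρ) h2
    · exact absurd rfl hxy

lemma freeB_stmt10 {X : Set (Finset V)} (hXc : IsComplex X)
    (hV : (Finset.univ : Finset V) ∉ X) {c w : V}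
    (hc : Finset.univ.erase c ∈ X) (hw : Finset.univ.erase w ∉ X)
    (h0 : ∀ s : Finset V, s ∉ X → 2 ≤ s.card) :
    HasFreeFace X := by
  have hcw : c ≠ w := fun h => hw (h ▸ hc)
  have hn3 : 3 ≤ Fintype.card V := by
    have := h0 _ hw
    rw [Finset.card_erase_of_mem (Finset.mem_univ w), Finset.card_univ] at this
    omega
  have hsub : (Finset.univ \ {c, w} : Finset V) ⊆ Finset.univ.erase c := by
    rw [Finset.erase_eq]
    exact Finset.sdiff_subset_sdiff (Finset.Subset.refl _) (by simp)
  refine ⟨Finset.univ \ {c, w}, Finset.univ.erase c, ?_, ?_, hc, ?_, ?_⟩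
  · exact hXc _ hc _ hsub
  · rw [← Finset.card_pos, Finset.card_sdiff_of_subset (Finset.subset_univ _), Finset.card_pair hcw,
      Finset.card_univ]
    omega
  · refine ⟨hsub, fun hcon => ?_⟩
    have hwσ : w ∈ Finset.univ.erase c := Finset.mem_erase.mpr ⟨Ne.symm hcw, Finset.mem_univ w⟩
    have := hcon hwσ
    simp at this
  · intro ρ hρ hss
    have hρc := compl_eq_aux_stmt10 (s := ({c, w} : Finset V)) hss.subset
    by_cases hcρ : c ∈ ρ <;> by_cases hwρ : w ∈ ρ
    · exfalso
      have : ({c, w} : Finset V) \ ρ = ∅ := Finset.sdiff_eq_empty_iff_subset.mpr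
        (by intro y hy; rcases Finset.mem_insert.mp hy with rfl | hy
            · exact hcρ
            · rw [Finset.mem_singleton.mp hy]; exact hwρ)
      rw [this, Finset.sdiff_empty] at hρc
      exact hV (hρc ▸ hρ)
    · exfalso
      have : ({c, w} : Finset V) \ ρ = {w} := by
        ext y
        simp only [Finset.mem_sdiff, Finset.mem_insert, Finset.mem_singleton]
        constructor
        · rintro ⟨rfl | rfl, hy⟩
          · exact absurd hcρ hy
          · rfl
        · rintro rfl
          exact ⟨Or.inr rfl, hwρ⟩
      rw [this, ← Finset.erase_eq] at hρc
      exact hw (hρc ▸ hρ)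
    · have : ({c, w} : Finset V) \ ρ = {c} := by
        ext y
        simp only [Finset.mem_sdiff, Finset.mem_insert, Finset.mem_singleton]
        constructor
        · rintro ⟨rfl | rfl, hy⟩
          · rfl
          · exact absurd hwρ hy
        · rintro rfl
          exact ⟨Or.inl rfl, hcρ⟩
      rw [this, ← Finset.erase_eq] at hρc
      exact hρc
    · exfalso
      have : ({c, w} : Finset V) \ ρ = {c, w} := by
        ext y
        simp only [Finset.mem_sdiff, Finset.mem_insert, Finset.mem_singleton]
        constructor
        · exact fun h => h.1
        · rintro (rfl | rfl)
          · exact ⟨Or.inl rfl, hcρ⟩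
          · exact ⟨Or.inr rfl, hwρ⟩
      rw [this] at hρc
      exact hss.ne hρc.symm

end AuxStmt10

/-- Let `n ≥ 2` and let `X` be an anticollapsible simplicial complex on `n` vertices of
dimension at least `n - 3` (i.e. with a face of at least `n - 2` vertices). Then `X` has
at least one free face. -/
theorem stmt_10 {V : Type*} [Fintype V] [DecidableEq V] (n : ℕ) (hn : 2 ≤ n)
    (hcard : Fintype.card V = n) (X : Set (Finset V)) (hX : IsComplex X)
    (hvert : ∀ v : V, ({v} : Finset V) ∈ X)
    (hdim : ∃ σ ∈ X, n - 2 ≤ σ.card)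
    (hanti : AnticollapsesTo X (Set.univ : Set (Finset V))) :
    HasFreeFace X := by
  by_contra hfree
  have hnV : Nonempty V := by
    rw [← Fintype.card_pos_iff]
    omega
  obtain ⟨v0⟩ := hnV
  have h0 : ∀ s : Finset V, s ∉ X → 2 ≤ s.card := by
    intro s hs
    by_contra hlt
    push_neg at hlt
    interval_cases h : s.card
    · rw [Finset.card_eq_zero.mp h] at hs
      exact hs (hX _ (hvert v0) ∅ (Finset.empty_subset _))
    · obtain ⟨v, hv⟩ := Finset.card_eq_one.mp h
      rw [hv] at hs
      exact hs (hvert v)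
  by_cases hV : (Finset.univ : Finset V) ∈ X
  · refine hfree ⟨Finset.univ.erase v0, Finset.univ, ?_, ?_, hV, ?_, ?_⟩
    · exact hX _ hV _ (Finset.erase_subset _ _)
    · rw [← Finset.card_pos, Finset.card_erase_of_mem (Finset.mem_univ v0), Finset.card_univ]
      omega
    · exact Finset.erase_ssubset (Finset.mem_univ v0)
    · intro ρ hρ hss
      obtain ⟨y, hyρ, hyτ⟩ := Finset.exists_of_ssubset hss
      have hyv : y = v0 := by
        by_contra h
        exact hyτ (Finset.mem_erase.mpr ⟨h, Finset.mem_univ y⟩)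
      subst hyv
      apply Finset.Subset.antisymm (Finset.subset_univ ρ)
      rw [← Finset.insert_erase (Finset.mem_univ y)]
      exact Finset.insert_subset hyρ hss.subset
  · by_cases hA : ∀ v : V, Finset.univ.erase v ∈ X
    · have hXuniv : X ≠ (Set.univ : Set (Finset V)) := by
        intro h
        rw [h] at hV
        exact hV (Set.mem_univ _)
      rcases Relation.ReflTransGen.cases_head hanti with heq | ⟨Y, hstep, _⟩
      · exact hXuniv heq
      · obtain ⟨τ, σ, hts, _, hτX, _, _⟩ := hstep
        have hτu : τ = Finset.univ := by
          by_contra h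
          obtain ⟨v, hv⟩ : ∃ v, v ∉ τ := by
            by_contra h'
            push_neg at h'
            exact h (Finset.eq_univ_iff_forall.mpr h')
          refine hτX (hX _ (hA v) τ ?_)
          intro y hy
          exact Finset.mem_erase.mpr ⟨fun he => hv (he ▸ hy), Finset.mem_univ y⟩
        exact (Finset.ssubset_def.mp hts).2 (hτu ▸ Finset.subset_univ σ)
    · push_neg at hA
      obtain ⟨w, hw⟩ := hA
      by_cases hB : ∃ c, Finset.univ.erase c ∈ X
      · obtain ⟨c, hc⟩ := hB
        exact hfree (freeB_stmt10 hX hV hc hw h0)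
      · push_neg at hB
        have hP : Pinv X := anti_P_stmt10 (by omega) hX hanti
        obtain ⟨F, hF, hFcard⟩ := hdim
        have hFuniv : F ⊆ Finset.univ := Finset.subset_univ F
        have hFeq : Finset.univ \ (Finset.univ \ F) = F :=
          Finset.sdiff_sdiff_eq_self hFuniv
        have hscard : (Finset.univ \ F).card = Fintype.card V - F.card := by
          rw [Finset.card_sdiff_of_subset hFuniv, Finset.card_univ]
        have hFle : F.card ≤ Fintype.card V := by
          have := Finset.card_le_card hFuniv
          rwa [Finset.card_univ] at this
        have hs2 : (Finset.univ \ F).card = 2 := by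
          have hge : 2 ≤ (Finset.univ \ F).card := by
            by_contra hlt
            push_neg at hlt
            interval_cases h : (Finset.univ \ F).card
            · have : (Finset.univ \ F : Finset V) = ∅ := Finset.card_eq_zero.mp h
              rw [this, Finset.sdiff_empty] at hFeq
              exact hV (hFeq ▸ hF)
            · obtain ⟨v, hv⟩ := Finset.card_eq_one.mp h
              rw [hv, ← Finset.erase_eq] at hFeq
              exact hB v (hFeq ▸ hF)
          omega
        obtain ⟨a, b, hab, hseq⟩ := Finset.card_eq_two.mp hs2
        have hFeq2 : F = Finset.univ \ {a, b} := by
          rw [← hFeq, hseq]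
        have hRT : Relation.ReflTransGen (Erel X) a b := hP a b (hB a) (hB b)
        have key : ∀ b' : V, Relation.ReflTransGen (Erel X) a b' → a = b' ∨ Erel X a b' := by
          intro b' h
          induction h with
          | refl => exact Or.inl rfl
          | @tail mid newb h1 h2 ih =>
            rcases ih with rfl | hE
            · exact Or.inr h2
            · by_cases hone : a = newb
              · exact Or.inl hone
              · refine Or.inr ⟨hone, fun hin => ?_⟩
                exact hfree (freeC_stmt10 hX hV hB h0 hone hE.1 (Ne.symm h2.1)
                  hE.2 h2.2 hin)
        rcases key b hRT with rfl | hE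
        · exact hab rfl
        · exact hE.2 (hFeq2 ▸ hF)
end

section
/- (Patchwork theorem.) Let X be a simplicial complex, P its poset of nonempty faces ordered by inclusion, Q a partially ordered set, and φ : P → Q an order-preserving map. Suppose for every q ∈ Q there is an acyclic matching M_q on the Hasse diagram of X all of whose pairs consist of faces lying in the fiber φ^{-1}(q). Then the union of the matchings M_q over all q ∈ Q is an acyclic matching on the Hasse diagram of X. -/
/-- An edge of the Hasse diagram of `X`: a pair `(τ, σ)` of nonempty faces with
`τ ⊂ σ` and `dim σ = dim τ + 1`. -/
def HasseEdge {W : Type*} [DecidableEq W] (X : Set (Finset W)) (τ σ : Finset W) : Prop :=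
  τ ∈ X ∧ σ ∈ X ∧ τ.Nonempty ∧ τ ⊂ σ ∧ σ.card = τ.card + 1

/-- A matching on the Hasse diagram of `X`: a set of Hasse edges in which every face
occurs in at most one pair. -/
def IsMatching {W : Type*} [DecidableEq W] (X : Set (Finset W))
    (M : Set (Finset W × Finset W)) : Prop :=
  (∀ p ∈ M, HasseEdge X p.1 p.2) ∧
  (∀ p ∈ M, ∀ q ∈ M, p ≠ q → p.1 ≠ q.1 ∧ p.1 ≠ q.2 ∧ p.2 ≠ q.1 ∧ p.2 ≠ q.2)

/-- The step relation of the directed graph `G_M`: Hasse edges not in `M` are oriented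
upward, Hasse edges in `M` are oriented downward. -/
def MStep {W : Type*} [DecidableEq W] (X : Set (Finset W))
    (M : Set (Finset W × Finset W)) (γ δ : Finset W) : Prop :=
  (HasseEdge X γ δ ∧ (γ, δ) ∉ M) ∨ (HasseEdge X δ γ ∧ (δ, γ) ∈ M)

/-- `M` is an acyclic matching on the Hasse diagram of `X`: a matching such that the
directed graph `G_M` has no directed cycle. -/
def IsAcyclicMatching {W : Type*} [DecidableEq W] (X : Set (Finset W))
    (M : Set (Finset W × Finset W)) : Prop :=
  IsMatching X M ∧ ∀ γ : Finset W, ¬ Relation.TransGen (MStep X M) γ γ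

/-- A (nonempty) face of `X` is critical for `M` if it occurs in no pair of `M`. -/
def Critical {W : Type*} [DecidableEq W] (X : Set (Finset W))
    (M : Set (Finset W × Finset W)) (γ : Finset W) : Prop :=
  γ ∈ X ∧ γ.Nonempty ∧ ∀ p ∈ M, p.1 ≠ γ ∧ p.2 ≠ γ

/-- Patchwork theorem: if `φ` is an order-preserving map from the poset of nonempty faces
of `X` to a poset `Q`, and for every `q ∈ Q` we have an acyclic matching `M q` all of
whose pairs lie in the fiber `φ⁻¹(q)`, then the union of the matchings `M q` is an
acyclic matching on the Hasse diagram of `X`. -/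
theorem stmt_13 {W : Type*} [DecidableEq W] {Q : Type*} [PartialOrder Q]
    (X : Set (Finset W)) (hX : IsComplex X) (φ : Finset W → Q)
    (hφ : ∀ γ ∈ X, ∀ δ ∈ X, γ.Nonempty → γ ⊆ δ → φ γ ≤ φ δ)
    (M : Q → Set (Finset W × Finset W))
    (hM : ∀ q : Q, IsAcyclicMatching X (M q))
    (hfib : ∀ q : Q, ∀ p ∈ M q, φ p.1 = q ∧ φ p.2 = q) :
    IsAcyclicMatching X (⋃ q : Q, M q) := by
  have mono : ∀ a b, MStep X (⋃ q : Q, M q) a b → φ a ≤ φ b := by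
    rintro a b (⟨he, _⟩ | ⟨he, hm⟩)
    · exact hφ a he.1 b he.2.1 he.2.2.1 he.2.2.2.1.subset
    · simp only [Set.mem_iUnion] at hm
      obtain ⟨q, hq⟩ := hm
      have h := hfib q (b, a) hq
      exact le_of_eq (h.2.trans h.1.symm)
  have conv : ∀ (q : Q) (a b : Finset W), MStep X (⋃ q : Q, M q) a b →
      φ a = q → φ b = q → MStep X (M q) a b := by
    rintro q a b (⟨he, hm⟩ | ⟨he, hm⟩) ha hb
    · exact Or.inl ⟨he, fun hmem => hm (Set.mem_iUnion.2 ⟨q, hmem⟩)⟩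
    · simp only [Set.mem_iUnion] at hm
      obtain ⟨q', hq'⟩ := hm
      have h := hfib q' (b, a) hq'
      have : q' = q := h.1.symm.trans hb
      exact Or.inr ⟨he, this ▸ hq'⟩
  constructor
  · constructor
    · intro p hp
      simp only [Set.mem_iUnion] at hp
      obtain ⟨q, hq⟩ := hp
      exact (hM q).1.1 p hq
    · intro p hp r hr hne
      simp only [Set.mem_iUnion] at hp hr
      obtain ⟨q1, hp⟩ := hp
      obtain ⟨q2, hr⟩ := hr
      by_cases h : q1 = q2
      · subst h
        exact (hM q1).1.2 p hp r hr hne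
      · have h1 := hfib q1 p hp
        have h2 := hfib q2 r hr
        refine ⟨fun e => h ?_, fun e => h ?_, fun e => h ?_, fun e => h ?_⟩
        · rw [← h1.1, e, h2.1]
        · rw [← h1.1, e, h2.2]
        · rw [← h1.2, e, h2.1]
        · rw [← h1.2, e, h2.2]
  · intro γ hγ
    have key : ∀ a b, Relation.TransGen (MStep X (⋃ q : Q, M q)) a b →
        φ a ≤ φ b ∧ (φ b ≤ φ a → Relation.TransGen (MStep X (M (φ a))) a b) := by
      intro a b h
      induction h with
      | @single c h =>
        refine ⟨mono _ _ h, fun hle => ?_⟩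
        have heq : φ a = φ c := le_antisymm (mono _ _ h) hle
        exact Relation.TransGen.single (conv (φ a) _ _ h rfl heq.symm)
      | @tail c d hac hcb ih =>
        refine ⟨ih.1.trans (mono _ _ hcb), fun hle => ?_⟩
        have hca : φ c ≤ φ a := (mono _ _ hcb).trans hle
        have hac' : φ a = φ c := le_antisymm ih.1 hca
        have hcb' : φ c = φ d := le_antisymm (mono _ _ hcb) (hle.trans ih.1)
        exact Relation.TransGen.tail (ih.2 hca)
          (conv (φ a) _ _ hcb hac'.symm (hac'.trans hcb').symm)
    exact (hM (φ γ)).2 γ ((key γ γ hγ).2 le_rfl)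
end

section
/- Let X be a simplicial complex on n vertices with ground set V, of dimension d, without free faces, that anticollapses to the simplex Δ_{n−1}. Let σ be a facet of X with dim σ ≥ 1, let v be a new vertex not in V, and let Y be the complex on V ∪ {v} obtained from X by deleting the facet σ and adding all faces ρ ∪ {v} for ρ a proper subset of σ (the cone with apex v over the boundary of σ). Then Y is a simplicial complex on n + 1 vertices that anticollapses to the simplex Δ_n on V ∪ {v} and has no free faces. -/
/-- An elementary anticollapse on the ground set `G`: add a pair `τ ⊂ σ ⊆ G` with
`|σ| = |τ| + 1`, where `τ ∉ X` and every subset of `σ` of cardinality `|σ| - 1` other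
than `τ` is already a face of `X`. -/
def AnticollapseStepOn {W : Type*} [DecidableEq W] (G : Finset W)
    (X Y : Set (Finset W)) : Prop :=
  ∃ τ σ : Finset W, σ ⊆ G ∧ τ ⊂ σ ∧ σ.card = τ.card + 1 ∧ τ ∉ X ∧
    (∀ ρ ⊆ σ, ρ.card + 1 = σ.card → ρ ≠ τ → ρ ∈ X) ∧
    Y = X ∪ {τ, σ}

/-- The full simplex on the ground set `G`: all subsets of `G`. -/
def simplexOn {W : Type*} [DecidableEq W] (G : Finset W) : Set (Finset W) :=
  {σ : Finset W | σ ⊆ G}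

/-- The complex obtained from `X` by deleting the facet `σ` and adding the cone with
apex `v` over the boundary of `σ` (a bistellar-0 flip / stacking move). -/
def stackMove {W : Type*} [DecidableEq W] (X : Set (Finset W)) (σ : Finset W) (v : W) :
    Set (Finset W) :=
  (X \ {σ}) ∪ {γ | ∃ ρ : Finset W, ρ ⊂ σ ∧ γ = insert v ρ}

section Aux
variable {W : Type*} [DecidableEq W]

def coneSet (v : W) (T : Finset W) : Set (Finset W) :=
  {γ | ∃ ρ : Finset W, ρ ⊆ T ∧ γ = insert v ρ}

lemma ins_inj {a : W} {s t : Finset W} (hs : a ∉ s) (ht : a ∉ t)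
    (h : insert a s = insert a t) : s = t := by
  rw [← Finset.erase_insert hs, h, Finset.erase_insert ht]

lemma eq_erase_of_card {ρ σ' : Finset W} (h : ρ ⊆ σ') (hc : ρ.card + 1 = σ'.card) :
    ∃ z ∈ σ', ρ = σ'.erase z := by
  have h1 : (σ' \ ρ).card = 1 := by
    rw [Finset.card_sdiff_of_subset h]; omega
  obtain ⟨z, hz⟩ := Finset.card_eq_one.mp h1
  have hzm : z ∈ σ' \ ρ := hz ▸ Finset.mem_singleton_self z
  refine ⟨z, (Finset.mem_sdiff.mp hzm).1, ?_⟩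
  have : σ' \ (σ' \ ρ) = ρ := by
    rw [Finset.sdiff_sdiff_self_left, Finset.inter_eq_right.mpr h]
  rw [← this, hz, Finset.sdiff_singleton_eq_erase]

/-- lifting anticollapse steps along union with a set of faces containing a new vertex -/
lemma step_union {V G : Finset W} (hVG : V ⊆ G) {C : Set (Finset W)}
    (hC : ∀ τ : Finset W, τ ⊆ V → τ ∉ C) {A B : Set (Finset W)}
    (h : AnticollapseStepOn V A B) :
    AnticollapseStepOn G (A ∪ C) (B ∪ C) := by
  obtain ⟨τ, σ, hσG, hτσ, hcard, hτA, hfac, hB⟩ := h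
  refine ⟨τ, σ, hσG.trans hVG, hτσ, hcard, ?_, fun ρ hρ h1 h2 => Or.inl (hfac ρ hρ h1 h2), ?_⟩
  · rintro (h | h)
    · exact hτA h
    · exact hC τ (hτσ.1.trans hσG) h
  · rw [hB]; ext γ
    simp only [Set.mem_union, Set.mem_insert_iff, Set.mem_singleton_iff]
    tauto

end Aux

section Cone
variable {W : Type*} [DecidableEq W]

lemma inner_chain (V T : Finset W) (v x y : W) (hv : v ∉ V) (hxV : x ∈ V) (hxT : x ∉ T)
    (hyT : y ∈ T) (hTV : T ⊆ V) :
    ∀ F : Finset (Finset W), (∀ ρ ∈ F, ρ ⊆ T.erase y) →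
      (∀ ρ ∈ F, ∀ z ∈ ρ, ρ.erase z ∈ F) →
    Relation.ReflTransGen (AnticollapseStepOn (insert v V))
      (simplexOn V ∪ coneSet v T)
      (simplexOn V ∪ coneSet v T ∪
        {γ | ∃ ρ ∈ F, γ = insert v (insert x ρ) ∨ γ = insert v (insert x (insert y ρ))}) := by
  have hyV : y ∈ V := hTV hyT
  have hvx : v ≠ x := fun h => hv (h ▸ hxV)
  have hvy : v ≠ y := fun h => hv (h ▸ hyV)
  have hxy : x ≠ y := fun h => hxT (h ▸ hyT)
  intro F
  induction F using Finset.strongInduction with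
  | _ F IH =>
    intro hF1 hF2
    rcases F.eq_empty_or_nonempty with rfl | hne
    · have : {γ | ∃ ρ ∈ (∅ : Finset (Finset W)),
          γ = insert v (insert x ρ) ∨ γ = insert v (insert x (insert y ρ))} = (∅ : Set (Finset W)) := by
        ext γ; simp
      rw [this, Set.union_empty]
    · obtain ⟨ρ, hρF, hmax⟩ := F.exists_max_image Finset.card hne
      have hρTy : ρ ⊆ T.erase y := hF1 ρ hρF
      have hρT : ρ ⊆ T := hρTy.trans (Finset.erase_subset y T)
      have hyρ : y ∉ ρ := fun h => (Finset.notMem_erase y T) (hρTy h)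
      have hxρ : x ∉ ρ := fun h => hxT (hρT h)
      have hvρ : v ∉ ρ := fun h => hv (hTV (hρT h))
      set F' := F.erase ρ with hF'
      have hF1' : ∀ ρ₂ ∈ F', ρ₂ ⊆ T.erase y := fun ρ₂ h => hF1 ρ₂ (Finset.mem_of_mem_erase h)
      have hF2' : ∀ ρ₂ ∈ F', ∀ z ∈ ρ₂, ρ₂.erase z ∈ F' := by
        intro ρ₂ h z hz
        have h2 : ρ₂ ∈ F := Finset.mem_of_mem_erase h
        refine Finset.mem_erase.mpr ⟨?_, hF2 ρ₂ h2 z hz⟩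
        intro heq
        have h3 : (ρ₂.erase z).card < ρ₂.card := Finset.card_erase_lt_of_mem hz
        have h4 : ρ₂.card ≤ ρ.card := hmax ρ₂ h2
        have h5 : (ρ₂.erase z).card = ρ.card := by rw [heq]
        omega
      have hchain := IH F' (Finset.erase_ssubset hρF) hF1' hF2'
      refine hchain.tail ?_
      -- the single anticollapse step adding insert v (insert x ρ) and insert v (insert x (insert y ρ))
      have hvins : v ∉ insert x ρ := by simp [hvx, hvρ]
      have hvins2 : v ∉ insert x (insert y ρ) := by simp [hvx, hvy, hvρ]
      have hyτ : y ∉ insert v (insert x ρ) := by simp [hvy.symm, Ne.symm hxy, hyρ]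
      have hσeq : insert v (insert x (insert y ρ)) = insert y (insert v (insert x ρ)) := by
        rw [Finset.insert_comm x y, Finset.insert_comm v y]
      refine ⟨insert v (insert x ρ), insert v (insert x (insert y ρ)), ?_, ?_, ?_, ?_, ?_, ?_⟩
      · -- σ' ⊆ insert v V
        exact Finset.insert_subset_insert v (by
          refine Finset.insert_subset hxV (Finset.insert_subset hyV (hρT.trans hTV)))
      · -- τ ⊂ σ'
        refine (Finset.ssubset_iff_of_subset
          (Finset.insert_subset_insert v (Finset.insert_subset_insert x (Finset.subset_insert y ρ)))).mpr
          ⟨y, ?_, hyτ⟩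
        simp
      · -- cards
        rw [hσeq, Finset.card_insert_of_notMem hyτ]
      · -- τ ∉ S F'
        rintro ((h | ⟨ρ₂, hρ₂T, heq⟩) | ⟨ρ₂, hρ₂F, (heq | heq)⟩)
        · exact hv (h (Finset.mem_insert_self v _))
        · have hx' : x ∈ insert v ρ₂ := by
            rw [← heq]; simp
          rcases Finset.mem_insert.mp hx' with h | h
          · exact hvx h.symm
          · exact hxT (hρ₂T h)
        · have hρ₂Ty := hF1' ρ₂ hρ₂F
          have hρ₂T : ρ₂ ⊆ T := hρ₂Ty.trans (Finset.erase_subset y T)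
          have hxρ₂ : x ∉ ρ₂ := fun h => hxT (hρ₂T h)
          have hvρ₂ : v ∉ ρ₂ := fun h => hv (hTV (hρ₂T h))
          have : ρ = ρ₂ := by
            have h1 := ins_inj hvins (by simp [hvx, hvρ₂]) heq
            exact ins_inj hxρ hxρ₂ h1
          subst this
          exact Finset.notMem_erase ρ F hρ₂F
        · apply hyτ
          rw [heq]; simp
      · -- all other facets present
        intro ρ' hsub hcard hne'
        obtain ⟨z, hzσ, rfl⟩ := eq_erase_of_card hsub hcard
        rcases Finset.mem_insert.mp hzσ with rfl | hz1
        · -- z = v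
          left; left
          rw [Finset.erase_insert hvins2]
          exact Finset.insert_subset hxV (Finset.insert_subset hyV (hρT.trans hTV))
        rcases Finset.mem_insert.mp hz1 with rfl | hz2
        · -- z = x
          left; right
          rw [Finset.erase_insert_of_ne hvx, Finset.erase_insert (by simp [hxy, hxρ])]
          exact ⟨insert y ρ, Finset.insert_subset hyT hρT, rfl⟩
        rcases Finset.mem_insert.mp hz2 with rfl | hz3
        · -- z = y : this is τ, excluded
          exact absurd (by rw [hσeq, Finset.erase_insert hyτ]) hne'
        · -- z ∈ ρ
          have hzv : v ≠ z := fun h => hvρ (h ▸ hz3)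
          have hzx : x ≠ z := fun h => hxρ (h ▸ hz3)
          have hzy : y ≠ z := fun h => hyρ (h ▸ hz3)
          right
          refine ⟨ρ.erase z, Finset.mem_erase.mpr ⟨fun h => Finset.notMem_erase z ρ (by rw [h]; exact hz3), hF2 ρ hρF z hz3⟩, Or.inr ?_⟩
          rw [Finset.erase_insert_of_ne hzv, Finset.erase_insert_of_ne hzx,
            Finset.erase_insert_of_ne hzy]
      · -- resulting set equality
        have hFe : insert ρ F' = F := Finset.insert_erase hρF
        ext γ
        simp only [Set.mem_union, Set.mem_setOf_eq, Set.mem_insert_iff, Set.mem_singleton_iff,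
          ← hFe, Finset.mem_insert]
        constructor
        · rintro ((h | h) | ⟨ρ₂, (rfl | h), hor⟩)
          · tauto
          · tauto
          · tauto
          · exact Or.inl (Or.inr ⟨ρ₂, h, hor⟩)
        · rintro ((h | ⟨ρ₂, h, hor⟩) | (rfl | rfl))
          · tauto
          · exact Or.inr ⟨ρ₂, Or.inr h, hor⟩
          · exact Or.inr ⟨ρ, Or.inl rfl, Or.inl rfl⟩
          · exact Or.inr ⟨ρ, Or.inl rfl, Or.inr rfl⟩
end Cone

section Outer
variable {W : Type*} [DecidableEq W]

lemma cone_extend (V T : Finset W) (v x y : W) (hv : v ∉ V) (hxV : x ∈ V) (hxT : x ∉ T)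
    (hyT : y ∈ T) (hTV : T ⊆ V) :
    Relation.ReflTransGen (AnticollapseStepOn (insert v V))
      (simplexOn V ∪ coneSet v T) (simplexOn V ∪ coneSet v (insert x T)) := by
  have hchain := inner_chain V T v x y hv hxV hxT hyT hTV ((T.erase y).powerset)
    (fun ρ h => Finset.mem_powerset.mp h)
    (fun ρ h z hz => Finset.mem_powerset.mpr ((Finset.erase_subset z ρ).trans (Finset.mem_powerset.mp h)))
  have hset : simplexOn V ∪ coneSet v T ∪
      {γ | ∃ ρ ∈ (T.erase y).powerset,
        γ = insert v (insert x ρ) ∨ γ = insert v (insert x (insert y ρ))} =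
      simplexOn V ∪ coneSet v (insert x T) := by
    ext γ
    constructor
    · rintro ((h | ⟨ρ, hρ, rfl⟩) | ⟨ρ, hρ, (rfl | rfl)⟩)
      · exact Or.inl h
      · exact Or.inr ⟨ρ, hρ.trans (Finset.subset_insert x T), rfl⟩
      · have hρT : ρ ⊆ T := (Finset.mem_powerset.mp hρ).trans (Finset.erase_subset y T)
        exact Or.inr ⟨insert x ρ, Finset.insert_subset_insert x hρT, rfl⟩
      · have hρT : ρ ⊆ T := (Finset.mem_powerset.mp hρ).trans (Finset.erase_subset y T)
        exact Or.inr ⟨insert x (insert y ρ),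
          Finset.insert_subset_insert x (Finset.insert_subset hyT hρT), rfl⟩
    · rintro (h | ⟨ρ, hρ, rfl⟩)
      · exact Or.inl (Or.inl h)
      · by_cases hxρ : x ∈ ρ
        · have hρx : ρ.erase x ⊆ T := Finset.subset_insert_iff.mp hρ
          by_cases hyρ : y ∈ ρ
          · right
            refine ⟨(ρ.erase x).erase y, Finset.mem_powerset.mpr
              (Finset.erase_subset_erase y hρx), Or.inr ?_⟩
            have h1 : insert y ((ρ.erase x).erase y) = ρ.erase x :=
              Finset.insert_erase (Finset.mem_erase.mpr ⟨fun h => hxT (h ▸ hyT), hyρ⟩)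
            rw [h1, Finset.insert_erase hxρ]
          · right
            refine ⟨ρ.erase x, Finset.mem_powerset.mpr
              (Finset.subset_erase.mpr ⟨hρx, fun h => hyρ (Finset.mem_of_mem_erase h)⟩), Or.inl ?_⟩
            rw [Finset.insert_erase hxρ]
        · left; right
          refine ⟨ρ, ?_, rfl⟩
          have := Finset.subset_insert_iff.mp hρ
          rwa [Finset.erase_eq_of_notMem hxρ] at this
  rw [hset] at hchain
  exact hchain

lemma cone_to_simplex (V : Finset W) (v : W) (hv : v ∉ V) :
    ∀ (k : ℕ) (T : Finset W), T ⊆ V → T.Nonempty → (V \ T).card = k →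
    Relation.ReflTransGen (AnticollapseStepOn (insert v V))
      (simplexOn V ∪ coneSet v T) (simplexOn (insert v V)) := by
  intro k
  induction k with
  | zero =>
    intro T hTV _ hcard
    have hTV' : T = V := by
      have h1 : V ⊆ T := by
        intro a ha
        by_contra hna
        have : a ∈ V \ T := Finset.mem_sdiff.mpr ⟨ha, hna⟩
        have := Finset.card_eq_zero.mp hcard
        simp [this] at *
      exact Finset.Subset.antisymm hTV h1
    rw [hTV']
    have : simplexOn V ∪ coneSet v V = simplexOn (insert v V) := by
      ext γ
      constructor
      · rintro (h | ⟨ρ, hρ, rfl⟩)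
        · exact h.trans (Finset.subset_insert v V)
        · exact Finset.insert_subset_insert v hρ
      · intro h
        by_cases hvγ : v ∈ γ
        · exact Or.inr ⟨γ.erase v, Finset.subset_insert_iff.mp h, (Finset.insert_erase hvγ).symm⟩
        · left
          have := Finset.subset_insert_iff.mp h
          rwa [Finset.erase_eq_of_notMem hvγ] at this
    rw [this]
  | succ k IH =>
    intro T hTV hTne hcard
    have hne : (V \ T).Nonempty := Finset.card_pos.mp (by omega)
    obtain ⟨x, hx⟩ := hne
    obtain ⟨hxV, hxT⟩ := Finset.mem_sdiff.mp hx
    obtain ⟨y, hyT⟩ := hTne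
    have h1 := cone_extend V T v x y hv hxV hxT hyT hTV
    have h2 : (V \ insert x T).card = k := by
      rw [Finset.sdiff_insert, Finset.card_erase_of_mem hx, hcard]
      omega
    exact h1.trans (IH (insert x T) (Finset.insert_subset hxV hTV)
      ⟨y, Finset.mem_insert_of_mem hyT⟩ h2)

end Outer

section Helpers
variable {W : Type*} [DecidableEq W]

lemma mem_stackMove_iff {X : Set (Finset W)} {σ : Finset W} {v : W} {γ : Finset W} :
    γ ∈ stackMove X σ v ↔ (γ ∈ X ∧ γ ≠ σ) ∨ ∃ ρ : Finset W, ρ ⊂ σ ∧ γ = insert v ρ := by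
  simp [stackMove, Set.mem_diff, Set.mem_singleton_iff, Set.mem_union, Set.mem_setOf_eq]

end Helpers

/-- Let `X` be a complex on `n` vertices (ground set `V`) of dimension `d` without free
faces that anticollapses to the simplex on `V`. Let `σ` be a facet of `X` of dimension
at least `1` and `v` a new vertex. Then the complex obtained by deleting `σ` and adding
the cone with apex `v` over the boundary of `σ` is a simplicial complex on `n + 1`
vertices that anticollapses to the simplex on `V ∪ {v}` and has no free faces. -/
theorem stmt_16 {W : Type*} [DecidableEq W] (n d : ℕ) (V : Finset W) (hV : V.card = n)
    (X : Set (Finset W)) (hX : IsComplex X) (hsub : ∀ τ ∈ X, τ ⊆ V)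
    (hvert : ∀ w ∈ V, ({w} : Finset W) ∈ X)
    (hdim : Dim X d) (hfree : ¬ HasFreeFace X)
    (hanti : Relation.ReflTransGen (AnticollapseStepOn V) X (simplexOn V))
    (σ : Finset W) (hσ : σ ∈ X) (hfacet : ∀ ρ ∈ X, σ ⊆ ρ → ρ = σ)
    (hσdim : 2 ≤ σ.card) (v : W) (hv : v ∉ V) :
    IsComplex (stackMove X σ v) ∧
    (∀ τ ∈ stackMove X σ v, τ ⊆ insert v V) ∧
    (∀ w ∈ insert v V, ({w} : Finset W) ∈ stackMove X σ v) ∧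
    (insert v V).card = n + 1 ∧
    Relation.ReflTransGen (AnticollapseStepOn (insert v V)) (stackMove X σ v)
      (simplexOn (insert v V)) ∧
    ¬ HasFreeFace (stackMove X σ v) := by
  have hσV : σ ⊆ V := hsub σ hσ
  have hvσ : v ∉ σ := fun h => hv (hσV h)
  have hσne : σ.Nonempty := Finset.card_pos.mp (by omega)
  have hvnot : ∀ ρ : Finset W, ρ ⊆ V → v ∉ ρ := fun ρ h hm => hv (h hm)
  refine ⟨?_, ?_, ?_, ?_, ?_, ?_⟩
  · -- IsComplex
    intro γ hγ τ hτγ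
    rcases mem_stackMove_iff.mp hγ with ⟨hγX, hγσ⟩ | ⟨ρ, hρσ, rfl⟩
    · refine mem_stackMove_iff.mpr (Or.inl ⟨hX γ hγX τ hτγ, fun h => ?_⟩)
      exact hγσ (hfacet γ hγX (h ▸ hτγ))
    · by_cases hvτ : v ∈ τ
      · refine mem_stackMove_iff.mpr (Or.inr ⟨τ.erase v, ?_, (Finset.insert_erase hvτ).symm⟩)
        exact lt_of_le_of_lt (Finset.subset_insert_iff.mp hτγ) hρσ
      · have hτρ : τ ⊆ ρ := by
          have := Finset.subset_insert_iff.mp hτγ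
          rwa [Finset.erase_eq_of_notMem hvτ] at this
        refine mem_stackMove_iff.mpr (Or.inl ⟨hX σ hσ τ (hτρ.trans hρσ.subset), fun h => ?_⟩)
        exact hρσ.ne (Finset.Subset.antisymm hρσ.subset (h ▸ hτρ))
  · -- subsets of insert v V
    intro τ hτ
    rcases mem_stackMove_iff.mp hτ with ⟨hτX, _⟩ | ⟨ρ, hρσ, rfl⟩
    · exact (hsub τ hτX).trans (Finset.subset_insert v V)
    · exact Finset.insert_subset_insert v (hρσ.subset.trans hσV)
  · -- vertices
    intro w hw
    rcases Finset.mem_insert.mp hw with rfl | hwV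
    · refine mem_stackMove_iff.mpr (Or.inr ⟨∅, ?_, by simp⟩)
      exact Finset.empty_ssubset.mpr hσne
    · refine mem_stackMove_iff.mpr (Or.inl ⟨hvert w hwV, fun h => ?_⟩)
      have := congrArg Finset.card h
      simp only [Finset.card_singleton] at this
      omega
  · -- cardinality
    rw [Finset.card_insert_of_notMem hv, hV]
  · -- anticollapse chain
    have step0 : AnticollapseStepOn (insert v V) (stackMove X σ v) (X ∪ coneSet v σ) := by
      refine ⟨σ, insert v σ, Finset.insert_subset_insert v hσV, Finset.ssubset_insert hvσ,
        Finset.card_insert_of_notMem hvσ, ?_, ?_, ?_⟩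
      · intro h
        rcases mem_stackMove_iff.mp h with ⟨_, h2⟩ | ⟨ρ, _, h2⟩
        · exact h2 rfl
        · exact hvσ (by rw [h2]; exact Finset.mem_insert_self v ρ)
      · intro ρ' hsubσ hcard hne'
        obtain ⟨z, hz, rfl⟩ := eq_erase_of_card hsubσ hcard
        rcases Finset.mem_insert.mp hz with rfl | hzσ
        · exact absurd (Finset.erase_insert hvσ) hne'
        · refine mem_stackMove_iff.mpr (Or.inr ⟨σ.erase z, Finset.erase_ssubset hzσ, ?_⟩)
          rw [Finset.erase_insert_of_ne (fun h => hvσ (by rw [h]; exact hzσ))]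
      · ext γ
        simp only [Set.mem_union, Set.mem_insert_iff, Set.mem_singleton_iff, mem_stackMove_iff,
          coneSet, Set.mem_setOf_eq]
        constructor
        · rintro (hγX | ⟨ρ, hρσ, rfl⟩)
          · by_cases hγσ : γ = σ
            · exact Or.inr (Or.inl hγσ)
            · exact Or.inl (Or.inl ⟨hγX, hγσ⟩)
          · by_cases hρσ' : ρ = σ
            · exact Or.inr (Or.inr (by rw [hρσ']))
            · exact Or.inl (Or.inr ⟨ρ, ⟨hρσ, fun h => hρσ' (Finset.Subset.antisymm hρσ h)⟩, rfl⟩)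
        · rintro ((⟨hγX, _⟩ | ⟨ρ, hρσ, rfl⟩) | (rfl | rfl))
          · exact Or.inl hγX
          · exact Or.inr ⟨ρ, hρσ.subset, rfl⟩
          · exact Or.inl hσ
          · exact Or.inr ⟨σ, Finset.Subset.refl σ, rfl⟩
    have hC : ∀ τ : Finset W, τ ⊆ V → τ ∉ coneSet v σ := by
      rintro τ hτV ⟨ρ, _, rfl⟩
      exact hv (hτV (Finset.mem_insert_self v ρ))
    have chain2 : Relation.ReflTransGen (AnticollapseStepOn (insert v V))
        (X ∪ coneSet v σ) (simplexOn V ∪ coneSet v σ) :=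
      Relation.ReflTransGen.lift (fun A => A ∪ coneSet v σ)
        (fun _ _ h => step_union (Finset.subset_insert v V) hC h) _ _ hanti
    have chain3 := cone_to_simplex V v hv ((V \ σ).card) σ hσV hσne rfl
    exact (Relation.ReflTransGen.single step0).trans (chain2.trans chain3)
  · -- no free faces
    rintro ⟨τ, μ, hτY, hτne, hμY, hτμ, huniq⟩
    rcases mem_stackMove_iff.mp hτY with ⟨hτX, hτnσ⟩ | ⟨ρ, hρσ, rfl⟩
    · -- τ ∈ X, τ ≠ σ
      have hτV : τ ⊆ V := hsub τ hτX
      have hvτ : v ∉ τ := hvnot τ hτV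
      by_cases hτσ : τ ⊆ σ
      · have hτσs : τ ⊂ σ := ⟨hτσ, fun h => hτnσ (Finset.Subset.antisymm hτσ h)⟩
        have hμeq : μ = insert v τ :=
          (huniq (insert v τ) (mem_stackMove_iff.mpr (Or.inr ⟨τ, hτσs, rfl⟩))
            (Finset.ssubset_insert hvτ)).symm
        have hsdne : (σ \ τ).Nonempty := by
          obtain ⟨a, ha1, ha2⟩ := Finset.exists_of_ssubset hτσs
          exact ⟨a, Finset.mem_sdiff.mpr ⟨ha1, ha2⟩⟩
        by_cases hone : (σ \ τ).card = 1
        · -- (τ, σ) would be a free face of X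
          refine hfree ⟨τ, σ, hτX, hτne, hσ, hτσs, fun γ hγX hτγ => ?_⟩
          by_contra hγσ
          have hγμ := huniq γ (mem_stackMove_iff.mpr (Or.inl ⟨hγX, hγσ⟩)) hτγ
          rw [hμeq] at hγμ
          exact hv (hsub γ hγX (hγμ ▸ Finset.mem_insert_self v τ))
        · have h2 : 1 < (σ \ τ).card := by
            have := Finset.card_pos.mpr hsdne
            omega
          obtain ⟨a, ha, b, hb, hab⟩ := Finset.one_lt_card.mp h2
          obtain ⟨haσ, haτ⟩ := Finset.mem_sdiff.mp ha
          obtain ⟨hbσ, hbτ⟩ := Finset.mem_sdiff.mp hb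
          have hsub1 : insert a τ ⊂ σ := by
            refine (Finset.ssubset_iff_of_subset (Finset.insert_subset haσ hτσ)).mpr
              ⟨b, hbσ, ?_⟩
            simp [Ne.symm hab, hbτ]
          have hγY : insert v (insert a τ) ∈ stackMove X σ v :=
            mem_stackMove_iff.mpr (Or.inr ⟨insert a τ, hsub1, rfl⟩)
          have hτγ : τ ⊂ insert v (insert a τ) := by
            refine (Finset.ssubset_iff_of_subset ?_).mpr ⟨v, Finset.mem_insert_self v _, hvτ⟩
            exact (Finset.subset_insert a τ).trans (Finset.subset_insert v _)
          have := huniq _ hγY hτγ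
          rw [hμeq] at this
          have haμ : a ∈ insert v τ := this ▸ Finset.mem_insert_of_mem (Finset.mem_insert_self a τ)
          rcases Finset.mem_insert.mp haμ with rfl | h
          · exact hv (hσV haσ)
          · exact haτ h
      · -- ¬ τ ⊆ σ : free face of X directly
        rcases mem_stackMove_iff.mp hμY with ⟨hμX, _⟩ | ⟨ρ', hρ'σ, rfl⟩
        · refine hfree ⟨τ, μ, hτX, hτne, hμX, hτμ, fun γ hγX hτγ => ?_⟩
          have hγσ : γ ≠ σ := fun h => hτσ (h ▸ hτγ.subset)
          exact huniq γ (mem_stackMove_iff.mpr (Or.inl ⟨hγX, hγσ⟩)) hτγ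
        · have hτρ' : τ ⊆ ρ' := by
            have := Finset.subset_insert_iff.mp hτμ.subset
            rwa [Finset.erase_eq_of_notMem hvτ] at this
          exact hτσ (hτρ'.trans hρ'σ.subset)
    · -- τ = insert v ρ, ρ ⊂ σ
      have hρV : ρ ⊆ V := hρσ.subset.trans hσV
      have hvρ : v ∉ ρ := hvnot ρ hρV
      by_cases hone : (σ \ ρ).card = 1
      · obtain ⟨a, ha⟩ := Finset.card_eq_one.mp hone
        have hσρa : σ ⊆ insert a ρ := by
          intro b hbσ
          by_cases hbρ : b ∈ ρ
          · exact Finset.mem_insert_of_mem hbρ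
          · have : b ∈ σ \ ρ := Finset.mem_sdiff.mpr ⟨hbσ, hbρ⟩
            rw [ha] at this
            exact Finset.mem_insert.mpr (Or.inl (Finset.mem_singleton.mp this))
        rcases mem_stackMove_iff.mp hμY with ⟨hμX, _⟩ | ⟨ρ', hρ'σ, rfl⟩
        · exact hv (hsub μ hμX (hτμ.subset (Finset.mem_insert_self v ρ)))
        · have hρρ' : ρ ⊆ ρ' := by
            intro b hbρ
            rcases Finset.mem_insert.mp (hτμ.subset (Finset.mem_insert_of_mem hbρ)) with rfl | h
            · exact absurd hbρ hvρ
            · exact h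
          have hρne : ρ ≠ ρ' := by
            rintro rfl
            exact hτμ.ne rfl
          obtain ⟨z, hz1, hz2⟩ := Finset.exists_of_ssubset ⟨hρρ', fun h => hρne (Finset.Subset.antisymm hρρ' h)⟩
          have hza : z = a := by
            have : z ∈ σ \ ρ := Finset.mem_sdiff.mpr ⟨hρ'σ.subset hz1, hz2⟩
            rw [ha] at this
            exact Finset.mem_singleton.mp this
          have : σ ⊆ ρ' := hσρa.trans (Finset.insert_subset (hza ▸ hz1) hρρ')
          exact hρ'σ.ne (Finset.Subset.antisymm hρ'σ.subset this)
      · have hsdne : (σ \ ρ).Nonempty := by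
          obtain ⟨a, ha1, ha2⟩ := Finset.exists_of_ssubset hρσ
          exact ⟨a, Finset.mem_sdiff.mpr ⟨ha1, ha2⟩⟩
        have h2 : 1 < (σ \ ρ).card := by
          have := Finset.card_pos.mpr hsdne
          omega
        obtain ⟨a, ha, b, hb, hab⟩ := Finset.one_lt_card.mp h2
        obtain ⟨haσ, haρ⟩ := Finset.mem_sdiff.mp ha
        obtain ⟨hbσ, hbρ⟩ := Finset.mem_sdiff.mp hb
        have key : ∀ c ∈ σ \ ρ, ∀ d ∈ σ \ ρ, c ≠ d → insert v (insert c ρ) = μ := by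
          intro c hc d hd hcd
          obtain ⟨hcσ, hcρ⟩ := Finset.mem_sdiff.mp hc
          obtain ⟨hdσ, hdρ⟩ := Finset.mem_sdiff.mp hd
          have hsub1 : insert c ρ ⊂ σ := by
            refine (Finset.ssubset_iff_of_subset (Finset.insert_subset hcσ hρσ.subset)).mpr
              ⟨d, hdσ, ?_⟩
            simp [Ne.symm hcd, hdρ]
          have hγY : insert v (insert c ρ) ∈ stackMove X σ v :=
            mem_stackMove_iff.mpr (Or.inr ⟨insert c ρ, hsub1, rfl⟩)
          have hcτ : c ∉ insert v ρ := by
            simp only [Finset.mem_insert]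
            rintro (rfl | h)
            · exact hv (hσV hcσ)
            · exact hcρ h
          have hτγ : insert v ρ ⊂ insert v (insert c ρ) := by
            refine (Finset.ssubset_iff_of_subset ?_).mpr
              ⟨c, Finset.mem_insert_of_mem (Finset.mem_insert_self c ρ), hcτ⟩
            exact Finset.insert_subset_insert v (Finset.subset_insert c ρ)
          exact huniq _ hγY hτγ
        have hμa := key a ha b hb hab
        have hμb := key b hb a ha (Ne.symm hab)
        have : a ∈ insert v (insert b ρ) := by
          rw [hμb, ← hμa]
          exact Finset.mem_insert_of_mem (Finset.mem_insert_self a ρ)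
        rcases Finset.mem_insert.mp this with rfl | h
        · exact hv (hσV haσ)
        · rcases Finset.mem_insert.mp h with rfl | h2
          · exact hab rfl
          · exact haρ h2
end

section
/- Every non-evasive simplicial complex is collapsible. -/
/-- Non-evasiveness, defined inductively: a single vertex is non-evasive, and `X` is
non-evasive if there is a vertex `v` of `X` such that both `link(v, X)` and `del(v, X)`
are non-evasive. -/
inductive NonEvasive {V : Type*} [DecidableEq V] : Set (Finset V) → Prop
  | point (v : V) : NonEvasive {∅, ({v} : Finset V)}
  | step (X : Set (Finset V)) (v : V) (hv : ({v} : Finset V) ∈ X)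
      (hlink : NonEvasive {σ : Finset V | σ ∈ X ∧ v ∉ σ ∧ insert v σ ∈ X})
      (hdel : NonEvasive {σ : Finset V | σ ∈ X ∧ v ∉ σ}) :
      NonEvasive X

lemma insert_inj_of_not_mem {V : Type*} [DecidableEq V] {v : V} {a b : Finset V}
    (ha : v ∉ a) (hb : v ∉ b) (h : insert v a = insert v b) : a = b := by
  have := congrArg (·.erase v) h
  simpa [Finset.erase_insert ha, Finset.erase_insert hb] using this

lemma lift_step {V : Type*} [DecidableEq V] (v : V) (D : Set (Finset V))
    {L L' : Set (Finset V)} (hD : ∀ σ ∈ D, v ∉ σ) (hL : ∀ σ ∈ L, v ∉ σ)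
    (h : CollapseStep L L') :
    CollapseStep (D ∪ insert v '' L) (D ∪ insert v '' L') := by
  obtain ⟨τ, σ, ⟨hτ, _, hσ, hss, huniq⟩, rfl⟩ := h
  have hvτ : v ∉ τ := hL τ hτ
  have hvσ : v ∉ σ := hL σ hσ
  refine ⟨insert v τ, insert v σ,
    ⟨Or.inr ⟨τ, hτ, rfl⟩, ⟨v, Finset.mem_insert_self _ _⟩, Or.inr ⟨σ, hσ, rfl⟩, ?_, ?_⟩, ?_⟩
  · constructor
    · exact Finset.insert_subset_insert _ hss.subset
    · intro hc
      exact hss.ne (insert_inj_of_not_mem hvτ hvσ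
        (le_antisymm (Finset.insert_subset_insert _ hss.subset) hc))
  · rintro ρ (hρ | ⟨ρ₀, hρ₀, rfl⟩) hsub
    · exact absurd (hsub.subset (Finset.mem_insert_self v τ)) (hD ρ hρ)
    · have hvρ₀ : v ∉ ρ₀ := hL ρ₀ hρ₀
      have hsub' : τ ⊂ ρ₀ := by
        constructor
        · intro x hx
          have : x ∈ insert v ρ₀ := hsub.subset (Finset.mem_insert_of_mem hx)
          rcases Finset.mem_insert.mp this with rfl | h'
          · exact absurd hx hvτ
          · exact h'
        · intro hc
          exact hsub.ne (congrArg (insert v) (le_antisymm (by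
            intro x hx
            have : x ∈ insert v ρ₀ := hsub.subset (Finset.mem_insert_of_mem hx)
            rcases Finset.mem_insert.mp this with rfl | h'
            · exact absurd hx hvτ
            · exact h') hc))
      rw [huniq ρ₀ hρ₀ hsub']
  · ext ρ
    simp only [Set.mem_diff, Set.mem_union, Set.mem_image, Set.mem_insert_iff,
      Set.mem_singleton_iff, not_or]
    constructor
    · rintro (hρ | ⟨ρ₀, ⟨hρ₀, hne1, hne2⟩, rfl⟩)
      · refine ⟨Or.inl hρ, ?_, ?_⟩
        · rintro rfl; exact hD _ hρ (Finset.mem_insert_self v τ)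
        · rintro rfl; exact hD _ hρ (Finset.mem_insert_self v σ)
      · refine ⟨Or.inr ⟨ρ₀, hρ₀, rfl⟩, ?_, ?_⟩
        · intro hc; exact hne1 (insert_inj_of_not_mem (hL _ hρ₀) (hL _ hτ) hc)
        · intro hc; exact hne2 (insert_inj_of_not_mem (hL _ hρ₀) (hL _ hσ) hc)
    · rintro ⟨hρ | ⟨ρ₀, hρ₀, rfl⟩, hne1, hne2⟩
      · exact Or.inl hρ
      · refine Or.inr ⟨ρ₀, ⟨hρ₀, ?_, ?_⟩, rfl⟩
        · rintro rfl; exact hne1 rfl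
        · rintro rfl; exact hne2 rfl

lemma lift_trans {V : Type*} [DecidableEq V] (v : V) (D : Set (Finset V))
    {L L' : Set (Finset V)} (hD : ∀ σ ∈ D, v ∉ σ) (hL : ∀ σ ∈ L, v ∉ σ)
    (h : CollapsesTo L L') :
    CollapsesTo (D ∪ insert v '' L) (D ∪ insert v '' L') := by
  induction h with
  | refl => exact Relation.ReflTransGen.refl
  | tail h₁ h₂ ih =>
    exact ih.tail (lift_step v D hD (fun σ hσ => hL σ (collapsesTo_subset h₁ hσ)) h₂)

lemma main_aux {V : Type*} [DecidableEq V] (X : Set (Finset V)) (h : NonEvasive X) :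
    IsComplex X → ∃ v : V, CollapsesTo X {∅, ({v} : Finset V)} := by
  induction h with
  | point v => exact fun _ => ⟨v, Relation.ReflTransGen.refl⟩
  | step X v hv hlink hdel ihlink ihdel =>
    intro hX
    set L : Set (Finset V) := {σ : Finset V | σ ∈ X ∧ v ∉ σ ∧ insert v σ ∈ X} with hLdef
    set D : Set (Finset V) := {σ : Finset V | σ ∈ X ∧ v ∉ σ} with hDdef
    have hLcx : IsComplex L := by
      rintro σ ⟨hσX, hσv, hσi⟩ τ hτ
      exact ⟨hX σ hσX τ hτ, fun hc => hσv (hτ hc),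
        hX _ hσi _ (Finset.insert_subset_insert _ hτ)⟩
    have hDcx : IsComplex D := by
      rintro σ ⟨hσX, hσv⟩ τ hτ
      exact ⟨hX σ hσX τ hτ, fun hc => hσv (hτ hc)⟩
    obtain ⟨w, hw⟩ := ihlink hLcx
    obtain ⟨u, hu⟩ := ihdel hDcx
    have hwL : ({w} : Finset V) ∈ L := collapsesTo_subset hw (Or.inr rfl)
    have hwv : w ≠ v := fun hc => hwL.2.1 (by simp [hc])
    have hDv : ∀ σ ∈ D, v ∉ σ := fun σ hσ => hσ.2
    have hLv : ∀ σ ∈ L, v ∉ σ := fun σ hσ => hσ.2.1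
    -- X = D ∪ insert v '' L
    have hXeq : X = D ∪ insert v '' L := by
      ext σ
      constructor
      · intro hσ
        by_cases hvσ : v ∈ σ
        · refine Or.inr ⟨σ.erase v, ⟨hX σ hσ _ (Finset.erase_subset _ _),
            Finset.notMem_erase _ _, by rwa [Finset.insert_erase hvσ]⟩,
            Finset.insert_erase hvσ⟩
        · exact Or.inl ⟨hσ, hvσ⟩
      · rintro (hσ | ⟨σ₀, hσ₀, rfl⟩)
        · exact hσ.1
        · exact hσ₀.2.2
    have himg : insert v '' ({∅, ({w} : Finset V)} : Set (Finset V))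
        = {({v} : Finset V), ({v, w} : Finset V)} := by
      rw [Set.image_insert_eq, Set.image_singleton]
      simp [Finset.insert_empty]
    have step1 : CollapsesTo X (D ∪ {({v} : Finset V), ({v, w} : Finset V)}) := by
      rw [hXeq, ← himg]
      exact lift_trans v D hDv hLv hw
    have step2 : CollapseStep (D ∪ {({v} : Finset V), ({v, w} : Finset V)}) D := by
      refine ⟨{v}, {v, w}, ⟨Or.inr (Or.inl rfl), ⟨v, Finset.mem_singleton_self v⟩,
        Or.inr (Or.inr rfl), ?_, ?_⟩, ?_⟩
      · constructor
        · intro x hx; simp only [Finset.mem_singleton] at hx; simp [hx]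
        · intro hc
          have : w ∈ ({v} : Finset V) := hc (by simp)
          simp only [Finset.mem_singleton] at this
          exact hwv this
      · rintro ρ (hρ | hρ | hρ) hsub
        · exact absurd (hsub.subset (Finset.mem_singleton_self v)) (hDv ρ hρ)
        · exact absurd hρ hsub.ne'
        · exact hρ
      · ext ρ
        simp only [Set.mem_diff, Set.mem_union, Set.mem_insert_iff, Set.mem_singleton_iff,
          not_or]
        constructor
        · intro hρ
          refine ⟨Or.inl hρ, ?_, ?_⟩
          · rintro rfl; exact hDv _ hρ (Finset.mem_singleton_self v)
          · rintro rfl; exact hDv _ hρ (by simp)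
        · rintro ⟨hρ | hρ | hρ, hne1, hne2⟩
          · exact hρ
          · exact absurd hρ hne1
          · exact absurd hρ hne2
    exact ⟨u, (step1.tail step2).trans hu⟩

/-- Every non-evasive simplicial complex is collapsible. -/
theorem stmt_19 {V : Type*} [DecidableEq V] (X : Set (Finset V)) (hX : IsComplex X)
    (h : NonEvasive X) :
    ∃ v : V, CollapsesTo X {∅, ({v} : Finset V)} := by
  exact main_aux X h hX
end
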